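/- arXiv:0906.1165 — 6 statements merged into one kernel-verified Lean document; each statement's English description precedes it below -/
import Mathlib

section
/- Let n ≥ 1 and let Π be a permutation of {1,…,n}, and let Ḡ = G[Π] be the associated permutation graph (i ~ j in G[Π] iff (i−j)(Π⁻¹(i)−Π⁻¹(j)) < 0). Let C ⊆ {1,…,n} be an independent set of G[Π], enumerated as u₁, u₂, …, u_p so that Π⁻¹(u₁) < Π⁻¹(u₂) < ⋯ < Π⁻¹(u_p). For a vertex v ∉ C that has at least one neighbor in C, let l be the smallest and r the largest index t with u_t adjacent to v in G[Π]. Then v is adjacent in G[Π] to u_t for every t with l ≤ t ≤ r; i.e., the set of indices of C-vertices adjacent to v is exactly the integer interval {t : l ≤ t ≤ r}. -/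
/-- The permutation graph `G[Π]` on `Fin n`: `i ~ j` iff `(i-j)(Π⁻¹ i - Π⁻¹ j) < 0`. -/
def permGraph (n : ℕ) (π : Equiv.Perm (Fin n)) : SimpleGraph (Fin n) where
  Adj i j := ((i : ℤ) - (j : ℤ)) * ((π.symm i : ℤ) - ((π.symm j : ℤ))) < 0
  symm := by
    constructor
    intro i j h
    have e : ((j : ℤ) - (i : ℤ)) * ((π.symm j : ℤ) - (π.symm i : ℤ))
        = ((i : ℤ) - (j : ℤ)) * ((π.symm i : ℤ) - (π.symm j : ℤ)) := by ring
    simp only [e]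
    exact h
  loopless := by constructor; intro i; simp

/-- A set of vertices is stable (independent) if no two of its members are adjacent. -/
def IsStableSet {V : Type*} (G : SimpleGraph V) (s : Set V) : Prop :=
  s.Pairwise fun a b => ¬ G.Adj a b

/-- A finite graph is a threshold graph if there are nonnegative vertex weights and a
threshold `t` such that a set of vertices is stable iff its total weight is at most `t`. -/
def IsThresholdGraph {V : Type*} [Fintype V] (G : SimpleGraph V) : Prop :=
  ∃ (w : V → ℝ) (t : ℝ), (∀ v, 0 ≤ w v) ∧
    ∀ U : Finset V, ((∑ v ∈ U, w v) ≤ t ↔ IsStableSet G ↑U)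

/-- A graph is a permutation graph if it is isomorphic to `permGraph n π` for some
permutation `π` of `Fin n`. -/
def IsPermutationGraph {V : Type*} (G : SimpleGraph V) : Prop :=
  ∃ (n : ℕ) (π : Equiv.Perm (Fin n)), Nonempty (G ≃g permGraph n π)

/-- The threshold dimension of `G`: the least `k` such that the edge set of `G` is the
union of the edge sets of `k` threshold graphs on `V(G)`. -/
noncomputable def thresholdDim {V : Type*} [Fintype V] (G : SimpleGraph V) : ℕ :=
  sInf {k | ∃ T : Fin k → SimpleGraph V,
    (∀ i, IsThresholdGraph (T i)) ∧ (⋃ i, (T i).edgeSet) = G.edgeSet}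

/-- The independence number `α(G)`. -/
noncomputable def alphaNum {V : Type*} [Fintype V] (G : SimpleGraph V) : ℕ :=
  sSup {k | ∃ s : Finset V, s.card = k ∧ IsStableSet G ↑s}

/-- The graph `mK₂`: a perfect matching on `2m` vertices. -/
def matchingGraph (m : ℕ) : SimpleGraph (Fin m × Bool) where
  Adj a b := a.1 = b.1 ∧ a.2 ≠ b.2
  symm := by constructor; rintro a b ⟨h1, h2⟩; exact ⟨h1.symm, h2.symm⟩
  loopless := by constructor; rintro a ⟨h1, h2⟩; exact h2 rfl

/-- Lemma 2 (index sets are intervals): for a permutation graph `G[Π]`, an independent set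
enumerated in increasing order of `Π⁻¹`, and a vertex `v` outside it with at least one
neighbour inside, the set of indices of neighbours of `v` is exactly the integer interval
between the minimum index `l` and the maximum index `r`. -/
theorem index_set_is_interval
    (n : ℕ) (hn : 1 ≤ n) (π : Equiv.Perm (Fin n))
    (p : ℕ) (u : Fin p → Fin n)
    (hinj : Function.Injective u)
    (hC : IsStableSet (permGraph n π) (Set.range u))
    (hord : ∀ s t : Fin p, s < t → π.symm (u s) < π.symm (u t))
    (v : Fin n) (hv : v ∉ Set.range u)
    (l r : Fin p)
    (hl : (permGraph n π).Adj v (u l))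
    (hlmin : ∀ t : Fin p, (permGraph n π).Adj v (u t) → l ≤ t)
    (hr : (permGraph n π).Adj v (u r))
    (hrmax : ∀ t : Fin p, (permGraph n π).Adj v (u t) → t ≤ r) :
    ∀ t : Fin p, (permGraph n π).Adj v (u t) ↔ (l ≤ t ∧ t ≤ r) := by
  -- monotonicity of `u` in value
  have humono : ∀ s t : Fin p, s ≤ t → ((u s : ℤ) ≤ (u t : ℤ)) := by
    intro s t hst
    rcases eq_or_lt_of_le hst with h | h
    · simp [h]
    · have hne : u s ≠ u t := fun he => (ne_of_lt h) (hinj he)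
      have hna : ¬ (permGraph n π).Adj (u s) (u t) :=
        hC (Set.mem_range_self s) (Set.mem_range_self t) hne
      have hp : ((π.symm (u s) : ℤ)) < ((π.symm (u t) : ℤ)) := by
        exact_mod_cast hord s t h
      simp only [permGraph, not_lt] at hna
      nlinarith
  have hpmono : ∀ s t : Fin p, s ≤ t → ((π.symm (u s) : ℤ) ≤ (π.symm (u t) : ℤ)) := by
    intro s t hst
    rcases eq_or_lt_of_le hst with h | h
    · simp [h]
    · exact le_of_lt (by exact_mod_cast hord s t h)
  intro t
  constructor
  · intro h; exact ⟨hlmin t h, hrmax t h⟩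
  · rintro ⟨hlt, htr⟩
    have h1 := humono l t hlt
    have h2 := humono t r htr
    have h3 := hpmono l t hlt
    have h4 := hpmono t r htr
    simp only [permGraph] at hl hr ⊢
    rcases lt_trichotomy ((π.symm v : ℤ) - (π.symm (u l) : ℤ)) 0 with hB | hB | hB
    · -- π⁻¹ v below all, so v must be above all
      have hAl : 0 < ((v : ℤ) - (u l : ℤ)) := by nlinarith
      have hBr : ((π.symm v : ℤ) - (π.symm (u r) : ℤ)) < 0 := by linarith
      have hAr : 0 < ((v : ℤ) - (u r : ℤ)) := by nlinarith
      have hAt : 0 < ((v : ℤ) - (u t : ℤ)) := by linarith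
      have hBt : ((π.symm v : ℤ) - (π.symm (u t) : ℤ)) < 0 := by linarith
      nlinarith
    · nlinarith
    · have hAl : ((v : ℤ) - (u l : ℤ)) < 0 := by nlinarith
      have hAt : ((v : ℤ) - (u t : ℤ)) < 0 := by linarith
      have hAr : ((v : ℤ) - (u r : ℤ)) < 0 := by linarith
      have hBr : 0 < ((π.symm v : ℤ) - (π.symm (u r) : ℤ)) := by nlinarith
      have hBt : 0 < ((π.symm v : ℤ) - (π.symm (u t) : ℤ)) := by linarith
      nlinarith
end

section
/- Let n ≥ 1, let Π be a permutation of {1,…,n} and G[Π] the associated permutation graph. Let C be an independent set of G[Π] enumerated as u₁, …, u_p with Π⁻¹(u₁) < ⋯ < Π⁻¹(u_p). Let x = u_q ∈ C and let y ∉ C be a vertex that is not adjacent to x in G[Π] but has at least one neighbor in C, and let l and r be respectively the smallest and largest index t with u_t adjacent to y. Then: (1) if Π⁻¹(x) > Π⁻¹(y), then q > r; (2) if Π⁻¹(x) < Π⁻¹(y), then q < l. -/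
/-- Observation 1: for a permutation graph `G[Π]`, an independent set enumerated in
increasing order of `Π⁻¹`, a member `x = u q` of it and a vertex `y` outside it, not
adjacent to `x` but with at least one neighbour inside (with minimum index `l` and
maximum index `r`): if `Π⁻¹ x > Π⁻¹ y` then `q > r`, and if `Π⁻¹ x < Π⁻¹ y`
then `q < l`. -/
theorem index_position_of_nonneighbor
    (n : ℕ) (hn : 1 ≤ n) (π : Equiv.Perm (Fin n))
    (p : ℕ) (u : Fin p → Fin n)
    (hinj : Function.Injective u)
    (hC : IsStableSet (permGraph n π) (Set.range u))
    (hord : ∀ s t : Fin p, s < t → π.symm (u s) < π.symm (u t))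
    (q : Fin p) (y : Fin n) (hy : y ∉ Set.range u)
    (hxy : ¬ (permGraph n π).Adj (u q) y)
    (l r : Fin p)
    (hl : (permGraph n π).Adj y (u l))
    (hlmin : ∀ t : Fin p, (permGraph n π).Adj y (u t) → l ≤ t)
    (hr : (permGraph n π).Adj y (u r))
    (hrmax : ∀ t : Fin p, (permGraph n π).Adj y (u t) → t ≤ r) :
    (π.symm y < π.symm (u q) → r < q) ∧ (π.symm (u q) < π.symm y → q < l) := by

  classical
  have cast_lt : ∀ a b : Fin n, a < b → (a : ℤ) < (b : ℤ) := by
    intro a b h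
    exact_mod_cast (Fin.lt_iff_val_lt_val.mp h)
  have cast_ne : ∀ a b : Fin n, a ≠ b → (a : ℤ) ≠ (b : ℤ) := by
    intro a b h hc
    exact h (Fin.val_injective (by exact_mod_cast hc))
  have hxne : ∀ t : Fin p, y ≠ u t := by
    intro t h
    exact hy ⟨t, h.symm⟩
  have hadj : ∀ s t : Fin p, s ≠ t → ¬ (permGraph n π).Adj (u s) (u t) := by
    intro s t hst
    exact hC ⟨s, rfl⟩ ⟨t, rfl⟩ (fun h => hst (hinj h))
  constructor
  · intro h1
    by_contra hcon
    push_neg at hcon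
    have hqr : q ≠ r := by
      intro e
      subst e
      exact hxy hr.symm
    have hq_lt_r : q < r := lt_of_le_of_ne hcon hqr
    -- x > y from non-adjacency
    have hB : (π.symm y : ℤ) < (π.symm (u q) : ℤ) := cast_lt _ _ h1
    have hAB : 0 ≤ ((u q : ℤ) - (y : ℤ)) * ((π.symm (u q) : ℤ) - (π.symm y : ℤ)) :=
      not_lt.mp hxy
    have hA : (y : ℤ) < (u q : ℤ) := by
      rcases lt_trichotomy ((y : ℤ)) ((u q : ℤ)) with h | h | h
      · exact h
      · exact absurd h.symm (cast_ne _ _ (Ne.symm (hxne q)))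
      · exfalso
        nlinarith
    -- π⁻¹ (u q) < π⁻¹ (u r)
    have hQR : (π.symm (u q) : ℤ) < (π.symm (u r) : ℤ) := cast_lt _ _ (hord q r hq_lt_r)
    -- y adjacent to u r : (y - ur)(Py - Pur) < 0, Py - Pur < 0, so ur < y
    have hr' : ((y : ℤ) - (u r : ℤ)) * ((π.symm y : ℤ) - (π.symm (u r) : ℤ)) < 0 := hr
    have hury : (u r : ℤ) < (y : ℤ) := by nlinarith
    -- independence q r : (uq - ur)(Puq - Pur) ≥ 0, second factor > 0, so uq ≤ ur
    have hind : 0 ≤ ((u q : ℤ) - (u r : ℤ)) * ((π.symm (u q) : ℤ) - (π.symm (u r) : ℤ)) :=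
      not_lt.mp (hadj q r hqr)
    nlinarith
  · intro h1
    by_contra hcon
    push_neg at hcon
    have hql : l ≠ q := by
      intro e
      subst e
      exact hxy hl.symm
    have hl_lt_q : l < q := lt_of_le_of_ne hcon hql
    have hB : (π.symm (u q) : ℤ) < (π.symm y : ℤ) := cast_lt _ _ h1
    have hAB : 0 ≤ ((u q : ℤ) - (y : ℤ)) * ((π.symm (u q) : ℤ) - (π.symm y : ℤ)) :=
      not_lt.mp hxy
    have hA : (u q : ℤ) < (y : ℤ) := by
      rcases lt_trichotomy ((u q : ℤ)) ((y : ℤ)) with h | h | h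
      · exact h
      · exact absurd h (cast_ne _ _ (Ne.symm (hxne q)))
      · exfalso
        nlinarith
    have hLQ : (π.symm (u l) : ℤ) < (π.symm (u q) : ℤ) := cast_lt _ _ (hord l q hl_lt_q)
    have hl' : ((y : ℤ) - (u l : ℤ)) * ((π.symm y : ℤ) - (π.symm (u l) : ℤ)) < 0 := hl
    have huly : (y : ℤ) < (u l : ℤ) := by nlinarith
    have hind : 0 ≤ ((u l : ℤ) - (u q : ℤ)) * ((π.symm (u l) : ℤ) - (π.symm (u q) : ℤ)) :=
      not_lt.mp (hadj l q hql)
    nlinarith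
end

section
/- Let G be a permutation graph on n vertices and let Ḡ denote its complement. For every proper vertex coloring of Ḡ with color classes C₁, …, C_k, there exist threshold graphs T₁, …, T_k on the vertex set of G such that E(Ḡ) ⊆ E(T_j) for every j (each T_j is a supergraph of Ḡ) and E(Ḡ) = E(T₁) ∩ E(T₂) ∩ ⋯ ∩ E(T_k), i.e., Ḡ is the intersection of the k threshold graphs T₁, …, T_k. -/
/-- The graph whose adjacency is `u ≠ v ∧ m < f u + f v`. -/
def levelGraph {V : Type*} (f : V → ℕ) (m : ℕ) : SimpleGraph V where
  Adj u v := u ≠ v ∧ m < f u + f v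
  symm := by constructor; rintro u v ⟨h1, h2⟩; exact ⟨h1.symm, by omega⟩
  loopless := by constructor; rintro v ⟨h, _⟩; exact h rfl

lemma levelGraph_isThreshold {V : Type*} [Fintype V] (f : V → ℕ) (m : ℕ) :
    IsThresholdGraph (levelGraph f m) := by
  classical
  set N : ℕ := Fintype.card V with hN
  set q : ℝ := (N : ℝ) + 1 with hq
  have hq1 : (1 : ℝ) ≤ q := by
    rw [hq]
    have := Nat.cast_nonneg (α := ℝ) N
    linarith
  set g : V → ℕ := fun v => min (f v) (m + 1) with hg
  have hgle : ∀ v, g v ≤ m + 1 := fun v => min_le_right _ _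
  have hadj : ∀ u v, (levelGraph f m).Adj u v ↔ u ≠ v ∧ m < g u + g v := by
    intro u v
    constructor <;> rintro ⟨h1, h2⟩ <;> exact ⟨h1, by simp only [hg] at *; omega⟩
  set t : ℝ := 2 * N * q ^ (m + 1) + 1 with ht
  have hpow_le : ∀ {a b : ℕ}, a ≤ b → q ^ a ≤ q ^ b := fun h => pow_le_pow_right₀ hq1 h
  have hpow_pos : ∀ a : ℕ, (0 : ℝ) < q ^ a := fun a => pow_pos (by positivity) a
  set w : V → ℝ := fun v => if 2 * g v ≤ m then q ^ (g v + 1) else t - N * q ^ (m + 1 - g v)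
    with hw
  have hw0 : ∀ v, 0 ≤ w v := by
    intro v
    simp only [hw]
    split
    · positivity
    · have h1 : q ^ (m + 1 - g v) ≤ q ^ (m + 1) := hpow_le (by omega)
      have h2 := hpow_pos (m + 1)
      rw [ht]
      nlinarith [Nat.cast_nonneg (α := ℝ) N]
  refine ⟨w, t, hw0, ?_⟩
  intro U
  have hcard : ∀ s : Finset V, (s.card : ℝ) ≤ N := by
    intro s
    exact_mod_cast Nat.cast_le.mpr (show s.card ≤ N from Finset.card_le_univ s)
  constructor
  · -- sum ≤ t → stable
    intro hsum u hu v hv huv hA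
    rw [hadj] at hA
    obtain ⟨-, hguv⟩ := hA
    have hsub : {u, v} ⊆ U := by
      intro x hx
      rcases Finset.mem_insert.mp hx with h | h
      · subst h; exact hu
      · rw [Finset.mem_singleton] at h; subst h; exact hv
    have hle : w u + w v ≤ ∑ x ∈ U, w x := by
      have := Finset.sum_le_sum_of_subset_of_nonneg hsub (fun i _ _ => hw0 i)
      rwa [Finset.sum_pair huv] at this
    have hkey : ∀ a b : V, ¬ 2 * g a ≤ m → 2 * g b ≤ m → m < g a + g b →
        t < w a + w b := by
      intro a b ha hb hab
      have h1 : (m + 1 - g a) + 1 ≤ g b + 1 := by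
        have := hgle a; omega
      have h2 : q ^ ((m + 1 - g a) + 1) ≤ q ^ (g b + 1) := hpow_le h1
      rw [pow_succ] at h2
      have h3 := hpow_pos (m + 1 - g a)
      simp only [hw, if_neg ha, if_pos hb]
      nlinarith
    by_cases hu2 : 2 * g u ≤ m <;> by_cases hv2 : 2 * g v ≤ m
    · omega
    · exact absurd hsum (not_le.mpr (lt_of_lt_of_le (by
        have := hkey v u hv2 hu2 (by omega); linarith) hle))
    · exact absurd hsum (not_le.mpr (lt_of_lt_of_le (hkey u v hu2 hv2 hguv) hle))
    · -- both heavy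
      have h1 : q ^ (m + 1 - g u) ≤ q ^ (m + 1) := hpow_le (by omega)
      have h2 : q ^ (m + 1 - g v) ≤ q ^ (m + 1) := hpow_le (by omega)
      have : t < w u + w v := by
        simp only [hw, if_neg hu2, if_neg hv2, ht]
        nlinarith [Nat.cast_nonneg (α := ℝ) N]
      exact absurd hsum (not_le.mpr (lt_of_lt_of_le this hle))
  · -- stable → sum ≤ t
    intro hst
    by_cases hH : ∃ h ∈ U, ¬ 2 * g h ≤ m
    · obtain ⟨h, hhU, hheavy⟩ := hH
      have hrest : ∀ u ∈ U.erase h, w u ≤ q ^ (m + 1 - g h) := by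
        intro u hu
        have hne : u ≠ h := Finset.ne_of_mem_erase hu
        have huU := Finset.mem_of_mem_erase hu
        have hnadj : ¬ (levelGraph f m).Adj u h :=
          hst (Finset.mem_coe.mpr huU) (Finset.mem_coe.mpr hhU) hne
        rw [hadj] at hnadj
        push_neg at hnadj
        have hle2 : g u + g h ≤ m := by
          by_contra hc; exact absurd (hnadj hne) (by omega)
        have hlight : 2 * g u ≤ m := by omega
        simp only [hw, if_pos hlight]
        exact hpow_le (by omega)
      have hsplit : ∑ x ∈ U, w x = ∑ x ∈ U.erase h, w x + w h :=
        (Finset.sum_erase_add U w hhU).symm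
      have hsum1 : ∑ x ∈ U.erase h, w x ≤ (U.erase h).card • q ^ (m + 1 - g h) :=
        Finset.sum_le_card_nsmul _ _ _ hrest
      rw [nsmul_eq_mul] at hsum1
      have hc := hcard (U.erase h)
      have hp := hpow_pos (m + 1 - g h)
      have hwh : w h = t - N * q ^ (m + 1 - g h) := by simp only [hw, if_neg hheavy]
      rw [hsplit, hwh]
      nlinarith
    · push_neg at hH
      have hrest : ∀ u ∈ U, w u ≤ q ^ (m + 1) := by
        intro u hu
        have hlight := hH u hu
        simp only [hw, if_pos hlight]
        exact hpow_le (by omega)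
      have hsum1 : ∑ x ∈ U, w x ≤ U.card • q ^ (m + 1) := Finset.sum_le_card_nsmul _ _ _ hrest
      rw [nsmul_eq_mul] at hsum1
      have hc := hcard U
      have hp := hpow_pos (m + 1)
      rw [ht]
      nlinarith

/-- For a permutation graph `G` and any proper colouring of its complement `Ḡ` with
colour classes `C 1, …, C k`, there are threshold graphs `T 1, …, T k`, each a supergraph
of `Ḡ`, whose edge sets intersect exactly in the edge set of `Ḡ`. -/
theorem threshold_cover_from_coloring
    {V : Type*} [Fintype V] (G : SimpleGraph V)
    (hG : IsPermutationGraph G)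
    (k : ℕ) (C : Fin k → Set V)
    (hstable : ∀ j, IsStableSet Gᶜ (C j))
    (hpart : ∀ v : V, ∃! j, v ∈ C j) :
    ∃ T : Fin k → SimpleGraph V,
      (∀ j, IsThresholdGraph (T j)) ∧
      (∀ j, Gᶜ.edgeSet ⊆ (T j).edgeSet) ∧
      (⋂ j, (T j).edgeSet) = Gᶜ.edgeSet := by
  classical
  obtain ⟨n, π, ⟨φ⟩⟩ := hG
  set x : V → ℤ := fun v => ((φ v : Fin n) : ℤ) with hx
  set y : V → ℤ := fun v => ((π.symm (φ v) : Fin n) : ℤ) with hy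
  have hadj : ∀ u v, G.Adj u v ↔ (x u - x v) * (y u - y v) < 0 := by
    intro u v
    rw [← φ.map_rel_iff]
    rfl
  set Qlt : V → V → Prop := fun u v => x u < x v ∧ y v < y u with hQlt
  have hQ : ∀ u v, G.Adj u v ↔ (Qlt u v ∨ Qlt v u) := by
    intro u v
    rw [hadj, mul_neg_iff]
    constructor
    · rintro (⟨h1, h2⟩ | ⟨h1, h2⟩)
      · exact Or.inr ⟨by linarith, by linarith⟩
      · exact Or.inl ⟨by linarith, by linarith⟩
    · rintro (⟨h1, h2⟩ | ⟨h1, h2⟩)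
      · exact Or.inr ⟨by linarith, by linarith⟩
      · exact Or.inl ⟨by linarith, by linarith⟩
  have htrans : ∀ a b c, Qlt a b → Qlt b c → Qlt a c := by
    rintro a b c ⟨h1, h2⟩ ⟨h3, h4⟩
    exact ⟨h1.trans h3, h4.trans h2⟩
  have hclique : ∀ j, ∀ u ∈ C j, ∀ v ∈ C j, u ≠ v → Qlt u v ∨ Qlt v u := by
    intro j u hu v hv huv
    have h := hstable j hu hv huv
    simp only [SimpleGraph.compl_adj, not_and, not_not] at h
    exact (hQ u v).mp (h huv)
  set N : ℕ := Fintype.card V with hN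
  set M : ℕ := 2 * N + 1 with hM
  set β : Fin k → V → ℕ := fun j v =>
    (Finset.univ.filter (fun c => c ∈ C j ∧ (Qlt c v ∨ c = v))).card with hβ
  have hβle : ∀ j v, β j v ≤ N := by
    intro j v
    simpa [hN] using Finset.card_filter_le Finset.univ _
  have hmono : ∀ j u v, Qlt u v → β j u ≤ β j v := by
    intro j u v huv
    apply Finset.card_le_card
    intro c hc
    simp only [Finset.mem_filter, Finset.mem_univ, true_and] at hc ⊢
    obtain ⟨hcC, hle⟩ := hc
    refine ⟨hcC, Or.inl ?_⟩
    rcases hle with h | rfl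
    · exact htrans c u v h huv
    · exact huv
  set f : Fin k → V → ℕ := fun j v => if v ∈ C j then β j v else M - β j v with hf
  -- key: nonedge pairs are G-edges
  have hmain : ∀ j, ∀ u ∈ C j, ∀ (v : V), v ∉ C j → f j u + f j v ≤ M → u ≠ v → G.Adj u v := by
    intro j u hu v hv hsum huv
    have hfu : f j u = β j u := by simp only [hf, if_pos hu]
    have hfv : f j v = M - β j v := by simp only [hf, if_neg hv]
    have hβv := hβle j v
    have hbb : β j u ≤ β j v := by
      rw [hfu, hfv] at hsum
      omega
    by_contra hnadj
    have hnQ : ¬ Qlt u v ∧ ¬ Qlt v u := by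
      rw [hQ] at hnadj; push_neg at hnadj; exact hnadj
    -- show β j v < β j u : the filter set for v is ⊆ (filter set for u).erase u
    have huin : u ∈ Finset.univ.filter (fun c => c ∈ C j ∧ (Qlt c u ∨ c = u)) := by
      simp [hu]
    have hsub : Finset.univ.filter (fun c => c ∈ C j ∧ (Qlt c v ∨ c = v)) ⊆
        (Finset.univ.filter (fun c => c ∈ C j ∧ (Qlt c u ∨ c = u))).erase u := by
      intro c hc
      simp only [Finset.mem_filter, Finset.mem_univ, true_and] at hc
      obtain ⟨hcC, hle⟩ := hc
      have hcv : c ≠ v := by rintro rfl; exact hv hcC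
      have hQcv : Qlt c v := hle.resolve_right hcv
      have hcu : c ≠ u := by
        rintro rfl
        exact hnQ.1 hQcv
      rw [Finset.mem_erase]
      refine ⟨hcu, ?_⟩
      simp only [Finset.mem_filter, Finset.mem_univ, true_and]
      refine ⟨hcC, Or.inl ?_⟩
      rcases hclique j c hcC u hu hcu with h | h
      · exact h
      · exact absurd (htrans u c v h hQcv) hnQ.1
    have hlt : β j v < β j u := by
      have h1 := Finset.card_le_card hsub
      have h2 := Finset.card_erase_of_mem huin
      rw [h2] at h1
      have h3 : 0 < β j u := Finset.card_pos.mpr ⟨u, huin⟩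
      simp only [hβ] at h1 h3 ⊢
      omega
    omega
  have hK1 : ∀ j u v, u ≠ v → f j u + f j v ≤ M → G.Adj u v := by
    intro j u v huv hsum
    by_cases hu : u ∈ C j <;> by_cases hv : v ∈ C j
    · exact (hQ u v).mpr (hclique j u hu v hv huv)
    · exact hmain j u hu v hv hsum huv
    · exact (hmain j v hv u hu (by omega) huv.symm).symm
    · exfalso
      have h1 := hβle j u
      have h2 := hβle j v
      simp only [hf, if_neg hu, if_neg hv, hM] at hsum
      omega
  have hK2 : ∀ u v, G.Adj u v → ∃ j, f j u + f j v ≤ M := by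
    have key : ∀ u v, Qlt u v → ∃ j, f j u + f j v ≤ M := by
      intro u v huv
      obtain ⟨j, hj, -⟩ := hpart u
      refine ⟨j, ?_⟩
      have hfu : f j u = β j u := by simp only [hf, if_pos hj]
      by_cases hv : v ∈ C j
      · have h1 := hβle j u
        have h2 := hβle j v
        simp only [hf, if_pos hj, if_pos hv, hM]
        omega
      · have hfv : f j v = M - β j v := by simp only [hf, if_neg hv]
        have h2 := hβle j v
        have h3 := hmono j u v huv
        rw [hfu, hfv]
        omega
    intro u v huv
    rcases (hQ u v).mp huv with h | h
    · exact key u v h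
    · obtain ⟨j, hj⟩ := key v u h
      exact ⟨j, by omega⟩
  refine ⟨fun j => levelGraph (f j) M, fun j => levelGraph_isThreshold _ _, ?_, ?_⟩
  · intro j
    apply SimpleGraph.edgeSet_mono
    intro u v huv
    rw [SimpleGraph.compl_adj] at huv
    obtain ⟨hne, hnadj⟩ := huv
    refine ⟨hne, ?_⟩
    by_contra hc
    exact hnadj (hK1 j u v hne (by omega))
  · ext e
    induction e using Sym2.ind with
    | _ u v =>
      simp only [Set.mem_iInter, SimpleGraph.mem_edgeSet, SimpleGraph.compl_adj]
      constructor
      · intro h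
        obtain ⟨j0, -, -⟩ := hpart u
        have hne : u ≠ v := (h j0).1
        refine ⟨hne, fun hadj' => ?_⟩
        obtain ⟨j, hj⟩ := hK2 u v hadj'
        exact absurd (h j).2 (by omega)
      · intro ⟨hne, hnadj⟩ j
        refine ⟨hne, ?_⟩
        by_contra hc
        exact hnadj (hK1 j u v hne (by omega))
end

section
/- If G is a permutation graph, then the threshold dimension of G satisfies t(G) ≤ α(G), where α(G) is the cardinality of a maximum independent set of G; that is, there exist α(G) threshold graphs on V(G) whose edge sets have union equal to E(G). -/
-- Auxiliary material
lemma threshold_criterion {V : Type*} [Fintype V] [DecidableEq V]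
    (G : SimpleGraph V) (A : Finset V) (ι m : V → ℕ)
    (h1 : ∀ p ∈ A, ∀ q ∈ A, p ≠ q → G.Adj p q)
    (h2 : ∀ p ∈ A, ∀ u, u ∉ A → (G.Adj p u ↔ ι p ≤ m u))
    (h3 : ∀ u, u ∉ A → ∀ v, v ∉ A → ¬ G.Adj u v) :
    IsThresholdGraph G := by
  classical
  set N : ℕ := Fintype.card V with hN
  set wI : V → ℝ := fun v => ((N : ℝ) + 1) ^ (m v) with hwI
  have hwIpos : ∀ v, 0 < wI v := fun v => pow_pos (by positivity) _
  set S : ℝ := ∑ v ∈ Finset.univ \ A, wI v with hS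
  have hSnn : 0 ≤ S := Finset.sum_nonneg fun v _ => (hwIpos v).le
  set t : ℝ := 2 * S + 1 with ht
  set sig : V → ℝ := fun p => ∑ v ∈ (Finset.univ \ A).filter (fun v => m v < ι p), wI v
    with hsig
  have hsig_nn : ∀ p, 0 ≤ sig p := fun p => Finset.sum_nonneg fun v _ => (hwIpos v).le
  have hsig_le : ∀ p, sig p ≤ S := fun p =>
    Finset.sum_le_sum_of_subset_of_nonneg (Finset.filter_subset _ _)
      (fun v _ _ => (hwIpos v).le)
  have key : ∀ p u, ι p ≤ m u → sig p < wI u := by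
    intro p u hpu
    have hX : (0:ℝ) < ((N:ℝ)+1) := by positivity
    set F := (Finset.univ \ A).filter (fun v => m v < ι p) with hF
    have step : ∀ v ∈ F, wI v ≤ ((N:ℝ)+1)^(m u) / ((N:ℝ)+1) := by
      intro v hv
      have hmv : m v < ι p := (Finset.mem_filter.mp hv).2
      have hle : m v + 1 ≤ m u := Nat.succ_le_of_lt (lt_of_lt_of_le hmv hpu)
      have h1' : ((N:ℝ)+1) ^ (m v + 1) ≤ ((N:ℝ)+1) ^ (m u) :=
        pow_le_pow_right₀ (by linarith [Nat.cast_nonneg (α := ℝ) N]) hle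
      rw [pow_succ] at h1'
      rw [le_div_iff₀ hX]
      exact h1'
    have hcard : (F.card : ℝ) ≤ (N : ℝ) := by
      have : F.card ≤ N := le_trans (Finset.card_le_card (Finset.filter_subset _ _))
        (le_trans (Finset.card_le_card Finset.sdiff_subset) (le_of_eq (Finset.card_univ)))
      exact_mod_cast this
    have hXpow : (0:ℝ) < ((N:ℝ)+1)^(m u) := pow_pos hX _
    calc sig p ≤ F.card • (((N:ℝ)+1)^(m u) / ((N:ℝ)+1)) :=
          Finset.sum_le_card_nsmul _ _ _ step
      _ = (F.card : ℝ) * (((N:ℝ)+1)^(m u) / ((N:ℝ)+1)) := nsmul_eq_mul _ _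
      _ ≤ (N:ℝ) * (((N:ℝ)+1)^(m u) / ((N:ℝ)+1)) :=
          mul_le_mul_of_nonneg_right hcard (by positivity)
      _ < ((N:ℝ)+1) * (((N:ℝ)+1)^(m u) / ((N:ℝ)+1)) :=
          mul_lt_mul_of_pos_right (by linarith) (by positivity)
      _ = wI u := by field_simp; rfl
  set w : V → ℝ := fun v => if v ∈ A then t - sig v else wI v with hw
  have hwv : ∀ v, w v = if v ∈ A then t - sig v else wI v := fun _ => rfl
  have hwnn : ∀ v, 0 ≤ w v := by
    intro v
    rw [hwv]
    split_ifs with hv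
    · have := hsig_le v; linarith
    · exact (hwIpos v).le
  refine ⟨w, t, hwnn, ?_⟩
  intro U
  constructor
  · -- sum ≤ t → stable, by contraposition
    intro hsum
    by_contra hst
    unfold IsStableSet Set.Pairwise at hst
    push_neg at hst
    obtain ⟨x, hx, y, hy, hxy, hadj⟩ := hst
    have hxU : x ∈ U := Finset.mem_coe.mp hx
    have hyU : y ∈ U := Finset.mem_coe.mp hy
    have hpair : w x + w y ≤ ∑ v ∈ U, w v := by
      rw [← Finset.sum_pair hxy]
      apply Finset.sum_le_sum_of_subset_of_nonneg
      · intro z hz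
        rcases Finset.mem_insert.mp hz with rfl | hz
        · exact hxU
        · rw [Finset.mem_singleton.mp hz]; exact hyU
      · intro v _ _
        exact hwnn v
    have hgt : t < w x + w y := by
      rw [hwv, hwv]
      by_cases hxA : x ∈ A <;> by_cases hyA : y ∈ A
      · simp only [if_pos hxA, if_pos hyA]
        have := hsig_le x; have := hsig_le y
        linarith
      · simp only [if_pos hxA, if_neg hyA]
        have : ι x ≤ m y := (h2 x hxA y hyA).mp hadj
        have := key x y this
        linarith
      · simp only [if_neg hxA, if_pos hyA]
        have : ι y ≤ m x := (h2 y hyA x hxA).mp hadj.symm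
        have := key y x this
        linarith
      · exact absurd hadj (h3 x hxA y hyA)
    linarith
  · intro hst
    by_cases hA : ∃ p ∈ U, p ∈ A
    · obtain ⟨p, hpU, hpA⟩ := hA
      have huniq : ∀ q ∈ U, q ∈ A → q = p := by
        intro q hq hqA
        by_contra hne
        exact hst (Finset.mem_coe.mpr hq) (Finset.mem_coe.mpr hpU) hne (h1 q hqA p hpA hne)
      have hsub : U.erase p ⊆ (Finset.univ \ A).filter (fun v => m v < ι p) := by
        intro u hu
        have huU := Finset.mem_of_mem_erase hu
        have hune : u ≠ p := Finset.ne_of_mem_erase hu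
        have huA : u ∉ A := fun h => hune (huniq u huU h)
        have hnadj : ¬ G.Adj p u :=
          hst (Finset.mem_coe.mpr hpU) (Finset.mem_coe.mpr huU) (Ne.symm hune)
        have : ¬ (ι p ≤ m u) := fun h => hnadj ((h2 p hpA u huA).mpr h)
        simp [Finset.mem_filter, Finset.mem_sdiff, huA, not_le.mp this]
      rw [← Finset.add_sum_erase U _ hpU]
      have herase : ∑ v ∈ U.erase p, w v = ∑ v ∈ U.erase p, wI v := by
        apply Finset.sum_congr rfl
        intro u hu
        have hune : u ≠ p := Finset.ne_of_mem_erase hu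
        have huA : u ∉ A := fun h => hune (huniq u (Finset.mem_of_mem_erase hu) h)
        rw [hwv, if_neg huA]
      rw [herase]
      have : ∑ v ∈ U.erase p, wI v ≤ sig p :=
        Finset.sum_le_sum_of_subset_of_nonneg hsub (fun v _ _ => (hwIpos v).le)
      rw [hwv, if_pos hpA]
      linarith
    · push_neg at hA
      have heq : ∑ v ∈ U, w v = ∑ v ∈ U, wI v := by
        apply Finset.sum_congr rfl
        intro u hu
        rw [hwv, if_neg (hA u hu)]
      rw [heq]
      have : ∑ v ∈ U, wI v ≤ S := by
        apply Finset.sum_le_sum_of_subset_of_nonneg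
        · intro u hu; exact Finset.mem_sdiff.mpr ⟨Finset.mem_univ u, hA u hu⟩
        · intro v _ _; exact (hwIpos v).le
      linarith



/-- height of `i`: length of the longest chain (in the dominance order) ending at `i`. -/
def ht {n : ℕ} (π : Equiv.Perm (Fin n)) (i : Fin n) : ℕ :=
  ((Finset.univ.filter (fun j => j < i ∧ π.symm j < π.symm i)).attach.sup
    (fun j => ht π j.1)) + 1
termination_by i.1
decreasing_by
  have hj := j.2
  simp only [Finset.mem_filter] at hj
  exact hj.2.1

lemma ht_lt {n : ℕ} (π : Equiv.Perm (Fin n)) {i j : Fin n}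
    (h1 : j < i) (h2 : π.symm j < π.symm i) : ht π j < ht π i := by
  have hmem : j ∈ Finset.univ.filter (fun j => j < i ∧ π.symm j < π.symm i) := by
    simp [h1, h2]
  have hle : ht π j ≤ (Finset.univ.filter (fun j => j < i ∧ π.symm j < π.symm i)).attach.sup
      (fun j => ht π j.1) :=
    Finset.le_sup (f := fun j => ht π j.1) (Finset.mem_attach _ ⟨j, hmem⟩)
  conv_rhs => rw [ht]
  omega

lemma ht_def {n : ℕ} (π : Equiv.Perm (Fin n)) (i : Fin n) :
    ht π i = ((Finset.univ.filter (fun j => j < i ∧ π.symm j < π.symm i)).attach.sup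
      (fun j => ht π j.1)) + 1 := by
  rw [ht]

lemma permGraph_adj_iff {n : ℕ} (π : Equiv.Perm (Fin n)) (i j : Fin n) :
    (permGraph n π).Adj i j ↔
      (i < j ∧ π.symm j < π.symm i) ∨ (j < i ∧ π.symm i < π.symm j) := by
  show ((i : ℤ) - (j : ℤ)) * ((π.symm i : ℤ) - ((π.symm j : ℤ))) < 0 ↔ _
  rw [mul_neg_iff]
  have c1 : ((i : ℤ) - (j : ℤ) < 0) ↔ i < j := by
    rw [sub_neg]
    exact_mod_cast Iff.symm Fin.lt_iff_val_lt_val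
  have c2 : ((0:ℤ) < (i : ℤ) - (j : ℤ)) ↔ j < i := by
    rw [sub_pos]
    exact_mod_cast Iff.symm Fin.lt_iff_val_lt_val
  have c3 : ((π.symm i : ℤ) - (π.symm j : ℤ) < 0) ↔ π.symm i < π.symm j := by
    rw [sub_neg]
    exact_mod_cast Iff.symm Fin.lt_iff_val_lt_val
  have c4 : ((0:ℤ) < (π.symm i : ℤ) - (π.symm j : ℤ)) ↔ π.symm j < π.symm i := by
    rw [sub_pos]
    exact_mod_cast Iff.symm Fin.lt_iff_val_lt_val
  rw [c1, c2, c3, c4]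
  tauto

lemma exists_chain {n : ℕ} (π : Equiv.Perm (Fin n)) (i : Fin n) :
    ∃ s : Finset (Fin n), s.card = ht π i ∧ i ∈ s ∧
      (∀ j ∈ s, j = i ∨ (j < i ∧ π.symm j < π.symm i)) ∧
      IsStableSet (permGraph n π) ↑s := by
  suffices H : ∀ N : ℕ, ∀ i : Fin n, i.1 < N →
      ∃ s : Finset (Fin n), s.card = ht π i ∧ i ∈ s ∧
        (∀ j ∈ s, j = i ∨ (j < i ∧ π.symm j < π.symm i)) ∧
        IsStableSet (permGraph n π) ↑s by
    exact H (i.1 + 1) i (Nat.lt_succ_self _)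
  intro N
  induction N with
  | zero => intro i h; omega
  | succ N IH =>
    intro i hi
    by_cases hF : (Finset.univ.filter (fun j => j < i ∧ π.symm j < π.symm i)).Nonempty
    · obtain ⟨jj, -, hsup⟩ := Finset.exists_mem_eq_sup
        (Finset.univ.filter (fun j => j < i ∧ π.symm j < π.symm i)).attach
        (Finset.attach_nonempty_iff.mpr hF) (fun j => ht π j.1)
      obtain ⟨j, hjF⟩ := jj
      simp only [Finset.mem_filter, Finset.mem_univ, true_and] at hjF
      obtain ⟨hj1, hj2⟩ := hjF
      have hjN : j.1 < N := by
        have : j.1 < i.1 := hj1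
        omega
      obtain ⟨s', hcard, hjs', hprop, hstab⟩ := IH j hjN
      have hnotmem : i ∉ s' := by
        intro hmem
        rcases hprop i hmem with rfl | ⟨hlt, -⟩
        · exact absurd hj1 (lt_irrefl i)
        · exact absurd (lt_trans hlt hj1) (lt_irrefl i)
      refine ⟨insert i s', ?_, Finset.mem_insert_self i s', ?_, ?_⟩
      · rw [Finset.card_insert_of_notMem hnotmem, hcard]
        rw [ht_def π i, hsup]
      · intro l hl
        rcases Finset.mem_insert.mp hl with rfl | hl
        · exact Or.inl rfl
        · right
          rcases hprop l hl with rfl | ⟨hl1, hl2⟩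
          · exact ⟨hj1, hj2⟩
          · exact ⟨lt_trans hl1 hj1, lt_trans hl2 hj2⟩
      · have hsymm : Symmetric (fun a b => ¬ (permGraph n π).Adj a b) :=
          fun a b hab hba => hab hba.symm
        rw [Finset.coe_insert]
        unfold IsStableSet at hstab ⊢
        haveI : Std.Symm (fun a b => ¬ (permGraph n π).Adj a b) := ⟨fun a b h => hsymm h⟩
        rw [Set.pairwise_insert_of_symm]
        refine ⟨hstab, ?_⟩
        intro b hb hne
        have hb' : b < i ∧ π.symm b < π.symm i := by
          rcases hprop b (Finset.mem_coe.mp hb) with rfl | h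
          · exact ⟨hj1, hj2⟩
          · exact ⟨lt_trans h.1 hj1, lt_trans h.2 hj2⟩
        rw [permGraph_adj_iff]
        rintro (⟨h1, h2⟩ | ⟨h1, h2⟩)
        · exact absurd (lt_trans hb'.1 h1) (lt_irrefl b)
        · exact absurd (lt_trans hb'.2 h2) (lt_irrefl _)
    · rw [Finset.not_nonempty_iff_eq_empty] at hF
      refine ⟨{i}, ?_, Finset.mem_singleton_self i, ?_, ?_⟩
      · rw [ht_def π i, hF]
        simp
      · intro j hj; exact Or.inl (Finset.mem_singleton.mp hj)
      · rw [Finset.coe_singleton]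
        exact Set.pairwise_singleton _ _


lemma ht_pos {n : ℕ} (π : Equiv.Perm (Fin n)) (i : Fin n) : 1 ≤ ht π i := by
  rw [ht_def]; omega

lemma ht_le_alpha {n : ℕ} (π : Equiv.Perm (Fin n)) (i : Fin n) :
    ht π i ≤ alphaNum (permGraph n π) := by
  obtain ⟨s, hcard, -, -, hstab⟩ := exists_chain π i
  apply le_csSup
  · exact ⟨Fintype.card (Fin n), fun k hk => by
      obtain ⟨s, hc, -⟩ := hk; exact hc ▸ Finset.card_le_univ s⟩
  · exact ⟨s, hcard, hstab⟩

lemma ulOfHtEq {n : ℕ} (π : Equiv.Perm (Fin n)) {p q : Fin n} (hne : p ≠ q)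
    (h : ht π p = ht π q) (hlt : p < q) : π.symm q < π.symm p := by
  rcases lt_trichotomy (π.symm p) (π.symm q) with h1 | h1 | h1
  · have := ht_lt π hlt h1; omega
  · exact absurd (π.symm.injective h1) hne
  · exact h1

/-- The `k`-th threshold graph in the cover: edges of the permutation graph whose
upper-left endpoint has height `k`. -/
def TG {n : ℕ} (π : Equiv.Perm (Fin n)) (k : ℕ) : SimpleGraph (Fin n) where
  Adj i j := ((i < j ∧ π.symm j < π.symm i) ∧ ht π i = k) ∨
             ((j < i ∧ π.symm i < π.symm j) ∧ ht π j = k)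
  symm := by constructor; intro i j h; tauto
  loopless := by constructor; intro i; simp [lt_irrefl]

lemma TG_adj {n : ℕ} (π : Equiv.Perm (Fin n)) (k : ℕ) (i j : Fin n) :
    (TG π k).Adj i j ↔ ((i < j ∧ π.symm j < π.symm i) ∧ ht π i = k) ∨
             ((j < i ∧ π.symm i < π.symm j) ∧ ht π j = k) := Iff.rfl

lemma TG_threshold {n : ℕ} (π : Equiv.Perm (Fin n)) (k : ℕ) :
    IsThresholdGraph (TG π k) := by
  classical
  set A : Finset (Fin n) := Finset.univ.filter (fun p => ht π p = k) with hA
  have hmemA : ∀ p, p ∈ A ↔ ht π p = k := by intro p; simp [hA]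
  apply threshold_criterion (TG π k) A
      (fun p => (A.filter (fun p' => p' ≤ p)).card)
      (fun u => (A.filter (fun p' => p' < u ∧ π.symm u < π.symm p')).card)
  · -- A is a clique
    intro p hp q hq hne
    have hp' := (hmemA p).mp hp
    have hq' := (hmemA q).mp hq
    rw [TG_adj]
    rcases lt_trichotomy p q with hlt | heq | hlt
    · exact Or.inl ⟨⟨hlt, ulOfHtEq π hne (hp'.trans hq'.symm) hlt⟩, hp'⟩
    · exact absurd heq hne
    · exact Or.inr ⟨⟨hlt, ulOfHtEq π hne.symm (hq'.trans hp'.symm) hlt⟩, hq'⟩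
  · -- nested neighborhoods
    intro p hp u hu
    have hpk := (hmemA p).mp hp
    have huk : ht π u ≠ k := fun h => hu ((hmemA u).mpr h)
    rw [TG_adj]
    constructor
    · rintro (⟨⟨h1, h2⟩, -⟩ | ⟨-, hk⟩)
      · apply Finset.card_le_card
        intro p' hp'
        rw [Finset.mem_filter] at hp' ⊢
        obtain ⟨hp'A, hp'le⟩ := hp'
        refine ⟨hp'A, ?_⟩
        rcases eq_or_lt_of_le hp'le with rfl | hlt
        · exact ⟨h1, h2⟩
        · have hk' := (hmemA p').mp hp'A
          have hσ : π.symm p < π.symm p' := ulOfHtEq π (ne_of_lt hlt) (hk'.trans hpk.symm) hlt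
          exact ⟨lt_trans hlt h1, lt_trans h2 hσ⟩
      · exact absurd hk huk
    · intro hcard
      by_contra hadj
      have hnUL : ¬ (p < u ∧ π.symm u < π.symm p) := fun h => hadj (Or.inl ⟨h, hpk⟩)
      have hsub : A.filter (fun p' => p' < u ∧ π.symm u < π.symm p')
          ⊆ A.filter (fun p' => p' < p) := by
        intro p' hp'
        rw [Finset.mem_filter] at hp' ⊢
        obtain ⟨hp'A, h1, h2⟩ := hp'
        refine ⟨hp'A, ?_⟩
        rcases lt_trichotomy p' p with hlt | rfl | hlt
        · exact hlt
        · exact absurd ⟨h1, h2⟩ hnUL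
        · have hk' := (hmemA p').mp hp'A
          have hσ : π.symm p' < π.symm p := ulOfHtEq π (ne_of_lt hlt) (hpk.trans hk'.symm) hlt
          exact absurd ⟨lt_trans hlt h1, lt_trans h2 hσ⟩ hnUL
      have hlt2 : (A.filter (fun p' => p' < p)).card < (A.filter (fun p' => p' ≤ p)).card := by
        apply Finset.card_lt_card
        rw [Finset.ssubset_iff_of_subset (fun x hx => ?_)]
        · exact ⟨p, Finset.mem_filter.mpr ⟨hp, le_refl p⟩,
            fun hc => absurd ((Finset.mem_filter.mp hc).2) (lt_irrefl p)⟩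
        · rw [Finset.mem_filter] at hx ⊢; exact ⟨hx.1, le_of_lt hx.2⟩
      have := Finset.card_le_card hsub
      omega
  · intro u hu v hv hadj
    rcases (TG_adj π k u v).mp hadj with ⟨-, hk⟩ | ⟨-, hk⟩
    · exact hu ((hmemA u).mpr hk)
    · exact hv ((hmemA v).mpr hk)

lemma cover_adj {n : ℕ} (π : Equiv.Perm (Fin n)) (x y : Fin n) :
    (permGraph n π).Adj x y ↔
      ∃ a : Fin (alphaNum (permGraph n π)), (TG π (a.1+1)).Adj x y := by
  constructor
  · intro h
    rw [permGraph_adj_iff] at h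
    rcases h with ⟨h1, h2⟩ | ⟨h1, h2⟩
    · have hpos := ht_pos π x
      have hle := ht_le_alpha π x
      refine ⟨⟨ht π x - 1, by omega⟩, ?_⟩
      show (TG π (ht π x - 1 + 1)).Adj x y
      rw [Nat.sub_add_cancel hpos]
      exact Or.inl ⟨⟨h1, h2⟩, rfl⟩
    · have hpos := ht_pos π y
      have hle := ht_le_alpha π y
      refine ⟨⟨ht π y - 1, by omega⟩, ?_⟩
      show (TG π (ht π y - 1 + 1)).Adj x y
      rw [Nat.sub_add_cancel hpos]
      exact Or.inr ⟨⟨h1, h2⟩, rfl⟩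
  · rintro ⟨a, ha⟩
    rcases (TG_adj π _ x y).mp ha with ⟨⟨h1, h2⟩, -⟩ | ⟨⟨h1, h2⟩, -⟩ <;>
      rw [permGraph_adj_iff] <;> tauto

lemma isThresholdGraph_comap {V W : Type*} [Fintype V] [Fintype W] [DecidableEq W]
    (H : SimpleGraph W) (e : V ≃ W) (h : IsThresholdGraph H) :
    IsThresholdGraph (H.comap e) := by
  obtain ⟨w, t, hw, hiff⟩ := h
  refine ⟨fun v => w (e v), t, fun v => hw _, fun U => ?_⟩
  have hsum : ∑ v ∈ U, w (e v) = ∑ x ∈ U.image e, w x :=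
    (Finset.sum_image (fun x _ y _ hxy => e.injective hxy)).symm
  rw [hsum, hiff]
  constructor
  · intro hst a ha b hb hne hadj
    exact hst (Finset.mem_coe.mpr (Finset.mem_image_of_mem e (Finset.mem_coe.mp ha)))
      (Finset.mem_coe.mpr (Finset.mem_image_of_mem e (Finset.mem_coe.mp hb)))
      (fun h => hne (e.injective h)) hadj
  · intro hst x hx y hy hne hadj
    obtain ⟨a, haU, rfl⟩ := Finset.mem_image.mp (Finset.mem_coe.mp hx)
    obtain ⟨b, hbU, rfl⟩ := Finset.mem_image.mp (Finset.mem_coe.mp hy)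
    exact hst (Finset.mem_coe.mpr haU) (Finset.mem_coe.mpr hbU)
      (fun h => hne (congrArg e h)) hadj


/-- Theorem 5: if `G` is a permutation graph then `t(G) ≤ α(G)`. -/
theorem thresholdDim_le_alpha
    {V : Type*} [Fintype V] (G : SimpleGraph V)
    (hG : IsPermutationGraph G) :
    thresholdDim G ≤ alphaNum G := by
  classical
  obtain ⟨n, π, ⟨e⟩⟩ := hG
  have halpha : alphaNum (permGraph n π) ≤ alphaNum G := by
    have hbdd : BddAbove {k | ∃ s : Finset (Fin n), s.card = k ∧
        IsStableSet (permGraph n π) ↑s} :=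
      ⟨Fintype.card (Fin n), fun k hk => by
        obtain ⟨s, hc, -⟩ := hk; exact hc ▸ Finset.card_le_univ s⟩
    have hne : {k | ∃ s : Finset (Fin n), s.card = k ∧
        IsStableSet (permGraph n π) ↑s}.Nonempty :=
      ⟨0, ∅, Finset.card_empty, by rw [Finset.coe_empty]; exact Set.pairwise_empty _⟩
    obtain ⟨s, hcard, hstab⟩ := Nat.sSup_mem hne hbdd
    apply le_csSup
    · exact ⟨Fintype.card V, fun k hk => by
        obtain ⟨s, hc, -⟩ := hk; exact hc ▸ Finset.card_le_univ s⟩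
    · refine ⟨s.image (fun x => e.symm x), ?_, ?_⟩
      · rw [Finset.card_image_of_injective _ (fun a b hab => e.symm.injective hab), hcard]; rfl
      · intro a ha b hb hne2 hadj
        obtain ⟨x, hx, rfl⟩ := Finset.mem_image.mp (Finset.mem_coe.mp ha)
        obtain ⟨y, hy, rfl⟩ := Finset.mem_image.mp (Finset.mem_coe.mp hb)
        have hxy : x ≠ y := fun h => hne2 (by rw [h])
        apply hstab (Finset.mem_coe.mpr hx) (Finset.mem_coe.mpr hy) hxy
        have hmaps := e.map_adj_iff (v := e.symm x) (w := e.symm y)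
        rw [e.apply_symm_apply, e.apply_symm_apply] at hmaps
        exact hmaps.mpr hadj
  refine le_trans ?_ halpha
  apply Nat.sInf_le
  refine ⟨fun a => SimpleGraph.comap (fun v => e v) (TG π (a.1+1)), ?_, ?_⟩
  · intro a
    exact isThresholdGraph_comap _ e.toEquiv (TG_threshold π _)
  · ext s
    induction s using Sym2.ind with
    | _ x y =>
      simp only [Set.mem_iUnion, SimpleGraph.mem_edgeSet, SimpleGraph.comap_adj]
      have := (cover_adj π (e x) (e y)).symm.trans (e.map_adj_iff (v := x) (w := y))
      exact this
end

section
/- If G is a permutation graph on n vertices, then the threshold dimension of G satisfies t(G) ≤ min(α(G), n − α(G)), where α(G) is the cardinality of a maximum independent set of G. -/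
lemma split_threshold {V : Type*} [Fintype V] (T : SimpleGraph V) (C : Finset V)
    (ha : ∀ c ∈ C, ∀ c' ∈ C, c ≠ c' → T.Adj c c')
    (hb : ∀ u v : V, u ∉ C → v ∉ C → ¬ T.Adj u v)
    (hc : ∀ c ∈ C, ∀ u v : V, u ∉ C → v ∉ C → T.Adj v c → ¬ T.Adj u c →
      ∀ c' ∈ C, T.Adj u c' → T.Adj v c' ∧ c' ≠ c) :
    IsThresholdGraph T := by
  classical
  set N := Fintype.card V with hN
  set p : V → ℕ := fun v => (C.filter (fun c => T.Adj v c)).card with hp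
  set wI : V → ℕ := fun v => (N+1)^(p v) with hwI
  set B : ℕ := N * (N+1)^N with hB
  set t : ℕ := 2*B + 1 with ht
  set Sc : V → ℕ := fun c => ∑ u ∈ Cᶜ.filter (fun u => ¬ T.Adj u c), wI u with hSc
  set w : V → ℕ := fun v => if v ∈ C then t - Sc v else wI v with hw
  have hpN : ∀ v, p v ≤ N := fun v => le_trans (Finset.card_filter_le _ _)
    (le_trans (Finset.card_le_card (Finset.subset_univ C)) (le_of_eq Finset.card_univ))
  have hwIB : ∀ v, wI v ≤ (N+1)^N := fun v => Nat.pow_le_pow_right (by omega) (hpN v)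
  have hScB : ∀ c, Sc c ≤ B := by
    intro c
    calc Sc c ≤ (Cᶜ.filter (fun u => ¬ T.Adj u c)).card • (N+1)^N :=
          Finset.sum_le_card_nsmul _ _ _ (fun u _ => hwIB u)
      _ ≤ N * (N+1)^N := by
          rw [smul_eq_mul]
          exact Nat.mul_le_mul_right _ (le_trans (Finset.card_filter_le _ _)
            (le_trans (Finset.card_le_card (Finset.subset_univ _)) (le_of_eq Finset.card_univ)))
  have key : ∀ c ∈ C, ∀ v, v ∉ C → T.Adj v c → Sc c < wI v := by
    intro c hcC v hvC hadj
    have hcmem : c ∈ C.filter (fun c => T.Adj v c) := Finset.mem_filter.2 ⟨hcC, hadj⟩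
    have hpv1 : 1 ≤ p v := Finset.card_pos.2 ⟨c, hcmem⟩
    have step : ∀ u ∈ Cᶜ.filter (fun u => ¬ T.Adj u c), p u < p v := by
      intro u hu
      obtain ⟨huC, hnadj⟩ := Finset.mem_filter.1 hu
      rw [Finset.mem_compl] at huC
      have hsub : C.filter (fun c' => T.Adj u c') ⊆ (C.filter (fun c' => T.Adj v c')).erase c := by
        intro c' hc'
        obtain ⟨hc'C, hadj'⟩ := Finset.mem_filter.1 hc'
        obtain ⟨hv', hne⟩ := hc c hcC u v huC hvC hadj hnadj c' hc'C hadj'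
        exact Finset.mem_erase.2 ⟨hne, Finset.mem_filter.2 ⟨hc'C, hv'⟩⟩
      have := Finset.card_le_card hsub
      rw [Finset.card_erase_of_mem hcmem] at this
      simp only [hp] at hpv1 ⊢
      omega
    have hbound : ∀ u ∈ Cᶜ.filter (fun u => ¬ T.Adj u c), wI u ≤ (N+1)^(p v - 1) := by
      intro u hu
      refine Nat.pow_le_pow_right (by omega) ?_
      have := step u hu
      omega
    calc Sc c ≤ (Cᶜ.filter (fun u => ¬ T.Adj u c)).card • (N+1)^(p v - 1) :=
          Finset.sum_le_card_nsmul _ _ _ hbound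
      _ ≤ N * (N+1)^(p v - 1) := by
          rw [smul_eq_mul]
          exact Nat.mul_le_mul_right _ (le_trans (Finset.card_filter_le _ _)
            (le_trans (Finset.card_le_card (Finset.subset_univ _)) (le_of_eq Finset.card_univ)))
      _ < (N+1) * (N+1)^(p v - 1) := by
          have : 0 < (N+1)^(p v - 1) := Nat.pow_pos (by omega)
          exact Nat.mul_lt_mul_of_lt_of_le (by omega) (le_refl _) this
      _ = (N+1)^(p v) := by
          rw [← pow_succ']
          congr 1
          omega
  refine ⟨fun v => (w v : ℝ), (t : ℝ), fun v => by positivity, ?_⟩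
  intro U
  rw [← Nat.cast_sum, Nat.cast_le]
  constructor
  · intro hle
    by_contra hns
    simp only [IsStableSet, Set.Pairwise] at hns
    push_neg at hns
    obtain ⟨a, haU, b, hbU, hab, hadj⟩ := hns
    rw [Finset.mem_coe] at haU hbU
    have hsum : w a + w b ≤ ∑ v ∈ U, w v := by
      have hsub : ({a, b} : Finset V) ⊆ U := by
        intro z hz
        rcases Finset.mem_insert.1 hz with rfl | hz
        · exact haU
        · rw [Finset.mem_singleton] at hz; exact hz ▸ hbU
      calc w a + w b = ∑ v ∈ ({a, b} : Finset V), w v := (Finset.sum_pair hab).symm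
        _ ≤ ∑ v ∈ U, w v := Finset.sum_le_sum_of_subset hsub
    by_cases haC : a ∈ C <;> by_cases hbC : b ∈ C
    · have hwa : w a = t - Sc a := if_pos haC
      have hwb : w b = t - Sc b := if_pos hbC
      have h1 := hScB a; have h2 := hScB b
      omega
    · have hk := key a haC b hbC (T.adj_symm hadj)
      have hwa : w a = t - Sc a := if_pos haC
      have hwb : w b = wI b := if_neg hbC
      have := hScB a
      omega
    · have hk := key b hbC a haC hadj
      have hwa : w a = wI a := if_neg haC
      have hwb : w b = t - Sc b := if_pos hbC
      have := hScB b
      omega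
    · exact hb a b haC hbC hadj
  · intro hstab
    by_cases hUC : (U ∩ C).Nonempty
    · obtain ⟨c, hcmem⟩ := hUC
      obtain ⟨hcU, hcC⟩ := Finset.mem_inter.1 hcmem
      have huniq : ∀ d ∈ U, d ∈ C → d = c := by
        intro d hdU hdC
        by_contra hdc
        exact hstab (Finset.mem_coe.2 hdU) (Finset.mem_coe.2 hcU) hdc (ha d hdC c hcC hdc)
      have herase : ∀ u ∈ U.erase c, w u = wI u ∧ u ∈ Cᶜ.filter (fun u => ¬ T.Adj u c) := by
        intro u hu
        obtain ⟨huc, huU⟩ := Finset.mem_erase.1 hu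
        have huC : u ∉ C := fun h => huc (huniq u huU h)
        refine ⟨if_neg huC, Finset.mem_filter.2 ⟨Finset.mem_compl.2 huC, ?_⟩⟩
        exact hstab (Finset.mem_coe.2 huU) (Finset.mem_coe.2 hcU) huc
      have hsum1 : ∑ u ∈ U.erase c, w u ≤ Sc c := by
        calc ∑ u ∈ U.erase c, w u = ∑ u ∈ U.erase c, wI u :=
              Finset.sum_congr rfl (fun u hu => (herase u hu).1)
          _ ≤ Sc c := Finset.sum_le_sum_of_subset (fun u hu => (herase u hu).2)
      have htot : ∑ v ∈ U, w v = w c + ∑ u ∈ U.erase c, w u := by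
        rw [← Finset.sum_erase_add U w hcU]; omega
      have hwc : w c = t - Sc c := if_pos hcC
      have := hScB c
      omega
    · have hall : ∀ v ∈ U, w v = wI v := by
        intro v hv
        have : v ∉ C := fun h => hUC ⟨v, Finset.mem_inter.2 ⟨hv, h⟩⟩
        exact if_neg this
      calc ∑ v ∈ U, w v = ∑ v ∈ U, wI v := Finset.sum_congr rfl hall
        _ ≤ U.card • (N+1)^N := Finset.sum_le_card_nsmul _ _ _ (fun u _ => hwIB u)
        _ ≤ N * (N+1)^N := by
            rw [smul_eq_mul]
            exact Nat.mul_le_mul_right _ (le_trans (Finset.card_le_card (Finset.subset_univ _)) (le_of_eq Finset.card_univ))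
        _ ≤ t := by omega
section Alpha

variable {V : Type*} [Fintype V] {G : SimpleGraph V}

lemma alpha_bdd : BddAbove {k | ∃ s : Finset V, s.card = k ∧ IsStableSet G ↑s} :=
  ⟨Fintype.card V, by rintro k ⟨s, rfl, _⟩; exact s.card_le_univ⟩

lemma stable_card_le {s : Finset V} (hs : IsStableSet G ↑s) : s.card ≤ alphaNum G :=
  le_csSup alpha_bdd ⟨s, rfl, hs⟩

lemma alpha_mem : ∃ s : Finset V, s.card = alphaNum G ∧ IsStableSet G ↑s := by
  have h := Nat.sSup_mem (s := {k | ∃ s : Finset V, s.card = k ∧ IsStableSet G ↑s})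
    ⟨0, ∅, by simp, by simp [IsStableSet]⟩ alpha_bdd
  exact h

end Alpha

section Height

variable {V : Type*} [Fintype V]

/-- Longest chain (in the 2-dimensional dominance order given by `x, y`) ending at `a`. -/
noncomputable def htv (G : SimpleGraph V) (x y : V → ℤ) (a : V) : ℕ :=
  sSup {k | ∃ s : Finset V, s.card = k ∧
    (∀ w ∈ s, w = a ∨ (x w < x a ∧ y w < y a)) ∧ IsStableSet G ↑s}

variable {G : SimpleGraph V} {x y : V → ℤ}

lemma htv_bdd (a : V) : BddAbove {k | ∃ s : Finset V, s.card = k ∧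
    (∀ w ∈ s, w = a ∨ (x w < x a ∧ y w < y a)) ∧ IsStableSet G ↑s} :=
  ⟨Fintype.card V, by rintro k ⟨s, rfl, _, _⟩; exact s.card_le_univ⟩

lemma htv_mem (a : V) : ∃ s : Finset V, s.card = htv G x y a ∧
    (∀ w ∈ s, w = a ∨ (x w < x a ∧ y w < y a)) ∧ IsStableSet G ↑s := by
  have h := Nat.sSup_mem (s := {k | ∃ s : Finset V, s.card = k ∧
      (∀ w ∈ s, w = a ∨ (x w < x a ∧ y w < y a)) ∧ IsStableSet G ↑s})
    ⟨1, {a}, by simp, by simp, by simp [IsStableSet]⟩ (htv_bdd a)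
  exact h

lemma htv_ge_one (a : V) : 1 ≤ htv G x y a :=
  le_csSup (htv_bdd a) ⟨{a}, by simp, by simp, by simp [IsStableSet]⟩

lemma htv_le_alpha (a : V) : htv G x y a ≤ alphaNum G := by
  obtain ⟨s, hcard, _, hstab⟩ := htv_mem (G := G) (x := x) (y := y) a
  exact hcard ▸ stable_card_le hstab

variable (hAdj : ∀ a b, G.Adj a b ↔ (x a - x b) * (y a - y b) < 0)

lemma htv_lt (hAdj : ∀ a b, G.Adj a b ↔ (x a - x b) * (y a - y b) < 0)
    {a b : V} (h1 : x a < x b) (h2 : y a < y b) : htv G x y a < htv G x y b := by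
  classical
  obtain ⟨s, hcard, hmem, hstab⟩ := htv_mem (G := G) (x := x) (y := y) a
  have hbs : b ∉ s := by
    intro hbs
    rcases hmem b hbs with rfl | ⟨h3, _⟩ <;> omega
  have hdom : ∀ w ∈ s, x w < x b ∧ y w < y b := by
    intro w hw
    rcases hmem w hw with rfl | ⟨h3, h4⟩ <;> constructor <;> omega
  have hins : (insert b s).card = htv G x y a + 1 := by
    rw [Finset.card_insert_of_notMem hbs, hcard]
  have hle : htv G x y a + 1 ≤ htv G x y b := by
    refine le_csSup (htv_bdd b) ⟨insert b s, hins, ?_, ?_⟩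
    · intro w hw
      rcases Finset.mem_insert.1 hw with rfl | hw
      · exact Or.inl rfl
      · exact Or.inr (hdom w hw)
    · rw [Finset.coe_insert]
      refine Set.pairwise_insert.2 ⟨hstab, ?_⟩
      intro w hw _
      have hd := hdom w (Finset.mem_coe.1 hw)
      have hnadj : ¬ G.Adj b w := by
        rw [hAdj]
        nlinarith [hd.1, hd.2]
      exact ⟨hnadj, fun h => hnadj (G.adj_symm h)⟩
  omega

lemma adj_of_htv_eq (hAdj : ∀ a b, G.Adj a b ↔ (x a - x b) * (y a - y b) < 0)
    (hx : Function.Injective x) (hy : Function.Injective y)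
    {a b : V} (h : htv G x y a = htv G x y b) (hne : a ≠ b) : G.Adj a b := by
  by_contra hn
  have hxne : x a ≠ x b := fun hh => hne (hx hh)
  have hyne : y a ≠ y b := fun hh => hne (hy hh)
  rw [hAdj] at hn
  push_neg at hn
  rcases lt_or_gt_of_ne hxne with hlt | hlt
  · have : y a < y b := by
      rcases lt_or_gt_of_ne hyne with h' | h'
      · exact h'
      · exfalso; nlinarith
    have := htv_lt hAdj hlt this
    omega
  · have : y b < y a := by
      rcases lt_or_gt_of_ne hyne with h' | h'
      · exfalso; nlinarith
      · exact h'
    have := htv_lt hAdj hlt this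
    omega

end Height
def starGraph {V : Type*} (G : SimpleGraph V) (v : V) : SimpleGraph V where
  Adj a b := G.Adj a b ∧ (a = v ∨ b = v)
  symm := by constructor; rintro a b ⟨h1, h2⟩; exact ⟨h1.symm, h2.symm⟩
  loopless := ⟨fun a h => G.irrefl h.1⟩

lemma star_threshold {V : Type*} [Fintype V] (G : SimpleGraph V) (v : V) :
    IsThresholdGraph (starGraph G v) := by
  classical
  refine split_threshold _ {v} ?_ ?_ ?_
  · intro c hc c' hc' hne
    rw [Finset.mem_singleton] at hc hc'
    exact absurd (hc.trans hc'.symm) hne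
  · intro u w hu hw hadj
    rw [Finset.mem_singleton] at hu hw
    rcases hadj.2 with rfl | rfl
    · exact hu rfl
    · exact hw rfl
  · intro c hc u w hu hw _ hnadj c' hc' hadj'
    rw [Finset.mem_singleton] at hc hc'
    exact absurd ((hc'.trans hc.symm) ▸ hadj') hnadj

def levGraph {V : Type*} (x y : V → ℤ) (L : V → Prop) : SimpleGraph V where
  Adj a b := (L a ∧ L b ∧ a ≠ b) ∨ (L a ∧ ¬ L b ∧ x a < x b ∧ y b < y a) ∨
    (L b ∧ ¬ L a ∧ x b < x a ∧ y a < y b)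
  symm := by
    constructor
    rintro a b (⟨h1, h2, h3⟩ | ⟨h1, h2, h3, h4⟩ | ⟨h1, h2, h3, h4⟩)
    · exact Or.inl ⟨h2, h1, h3.symm⟩
    · exact Or.inr (Or.inr ⟨h1, h2, h3, h4⟩)
    · exact Or.inr (Or.inl ⟨h1, h2, h3, h4⟩)
  loopless := by
    constructor
    rintro a (⟨_, _, h⟩ | ⟨h1, h2, _⟩ | ⟨h1, h2, _⟩)
    · exact h rfl
    · exact h2 h1
    · exact h2 h1

lemma lev_threshold {V : Type*} [Fintype V] (x y : V → ℤ) (L : V → Prop)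
    (hanti : ∀ c c', L c → L c' → c ≠ c' →
      ((x c' < x c ∧ y c < y c') ∨ (x c < x c' ∧ y c' < y c))) :
    IsThresholdGraph (levGraph x y L) := by
  classical
  refine split_threshold _ (Finset.univ.filter fun v => L v) ?_ ?_ ?_
  · intro c hc c' hc' hne
    rw [Finset.mem_filter] at hc hc'
    exact Or.inl ⟨hc.2, hc'.2, hne⟩
  · intro u w hu hw hadj
    rw [Finset.mem_filter] at hu hw
    have hu' : ¬ L u := fun h => hu ⟨Finset.mem_univ u, h⟩
    have hw' : ¬ L w := fun h => hw ⟨Finset.mem_univ w, h⟩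
    rcases hadj with ⟨h1, _, _⟩ | ⟨h1, _, _⟩ | ⟨h1, _, _⟩
    · exact hu' h1
    · exact hu' h1
    · exact hw' h1
  · intro c hc u w hu hw hadjwc hnadjuc c' hc' hadjuc'
    rw [Finset.mem_filter] at hc hc' hu hw
    have hLc : L c := hc.2
    have hLc' : L c' := hc'.2
    have hLu : ¬ L u := fun h => hu ⟨Finset.mem_univ u, h⟩
    have hLw : ¬ L w := fun h => hw ⟨Finset.mem_univ w, h⟩
    have hwc : x c < x w ∧ y w < y c := by
      rcases hadjwc with ⟨h1, _, _⟩ | ⟨h1, _, _⟩ | ⟨_, _, h3, h4⟩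
      · exact absurd h1 hLw
      · exact absurd h1 hLw
      · exact ⟨h3, h4⟩
    have huc' : x c' < x u ∧ y u < y c' := by
      rcases hadjuc' with ⟨h1, _, _⟩ | ⟨h1, _, _⟩ | ⟨_, _, h3, h4⟩
      · exact absurd h1 hLu
      · exact absurd h1 hLu
      · exact ⟨h3, h4⟩
    have hne : c' ≠ c := by
      rintro rfl
      exact hnadjuc (Or.inr (Or.inr ⟨hLc, hLu, huc'.1, huc'.2⟩))
    refine ⟨?_, hne⟩
    rcases hanti c c' hLc hLc' (Ne.symm hne) with ⟨h1, h2⟩ | ⟨h1, h2⟩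
    · exact Or.inr (Or.inr ⟨hLc', hLw, by omega, by omega⟩)
    · exact absurd (Or.inr (Or.inr ⟨hLc, hLu, by omega, by omega⟩)) hnadjuc

lemma dim_le_alpha {V : Type*} [Fintype V] (G : SimpleGraph V) (x y : V → ℤ)
    (hx : Function.Injective x) (hy : Function.Injective y)
    (hAdj : ∀ a b, G.Adj a b ↔ (x a - x b) * (y a - y b) < 0) :
    thresholdDim G ≤ alphaNum G := by
  classical
  refine Nat.sInf_le ⟨fun k : Fin (alphaNum G) =>
    levGraph x y (fun v => htv G x y v = (k : ℕ) + 1), ?_, ?_⟩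
  · intro k
    refine lev_threshold x y _ ?_
    intro c c' h1 h2 hne
    have hadj := adj_of_htv_eq hAdj hx hy (h1.trans h2.symm) hne
    rw [hAdj, mul_neg_iff] at hadj
    rcases hadj with ⟨h3, h4⟩ | ⟨h3, h4⟩
    · left; constructor <;> omega
    · right; constructor <;> omega
  · ext e
    refine Sym2.ind (fun a b => ?_) e
    simp only [Set.mem_iUnion, SimpleGraph.mem_edgeSet]
    constructor
    · rintro ⟨i, hadj⟩
      rcases hadj with ⟨h1, h2, h3⟩ | ⟨_, _, h3, h4⟩ | ⟨_, _, h3, h4⟩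
      · exact adj_of_htv_eq hAdj hx hy (h1.trans h2.symm) h3
      · rw [hAdj, mul_neg_iff]; right; constructor <;> omega
      · rw [hAdj, mul_neg_iff]; left; constructor <;> omega
    · intro hadj
      have hne : a ≠ b := hadj.ne
      have hdico := hadj
      rw [hAdj, mul_neg_iff] at hdico
      have hha := htv_ge_one (G := G) (x := x) (y := y) a
      have hhb := htv_ge_one (G := G) (x := x) (y := y) b
      have hla := htv_le_alpha (G := G) (x := x) (y := y) a
      have hlb := htv_le_alpha (G := G) (x := x) (y := y) b
      rcases hdico with ⟨h1, h2⟩ | ⟨h1, h2⟩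
      · -- x b < x a, y a < y b
        refine ⟨⟨htv G x y b - 1, by omega⟩, ?_⟩
        by_cases hab : htv G x y a = htv G x y b
        · exact Or.inl ⟨by simp; omega, by simp; omega, hne⟩
        · exact Or.inr (Or.inr ⟨by simp; omega, by simp; omega, by omega, by omega⟩)
      · -- x a < x b, y b < y a
        refine ⟨⟨htv G x y a - 1, by omega⟩, ?_⟩
        by_cases hab : htv G x y a = htv G x y b
        · exact Or.inl ⟨by simp; omega, by simp; omega, hne⟩
        · exact Or.inr (Or.inl ⟨by simp; omega, by simp; omega, by omega, by omega⟩)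

lemma dim_le_compl_alpha {V : Type*} [Fintype V] (G : SimpleGraph V) :
    thresholdDim G ≤ Fintype.card V - alphaNum G := by
  classical
  obtain ⟨S, hcard, hstab⟩ := alpha_mem (G := G)
  have hD : Sᶜ.card = Fintype.card V - alphaNum G := by
    rw [Finset.card_compl, hcard]
  refine hD ▸ Nat.sInf_le ⟨fun i : Fin Sᶜ.card => starGraph G (Sᶜ.equivFin.symm i), ?_, ?_⟩
  · intro i; exact star_threshold G _
  · ext e
    refine Sym2.ind (fun a b => ?_) e
    simp only [Set.mem_iUnion, SimpleGraph.mem_edgeSet]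
    constructor
    · rintro ⟨i, hadj⟩; exact hadj.1
    · intro hadj
      have hne : a ≠ b := hadj.ne
      have : a ∉ S ∨ b ∉ S := by
        by_contra hcon
        push_neg at hcon
        exact hstab (Finset.mem_coe.2 hcon.1) (Finset.mem_coe.2 hcon.2) hne hadj
      rcases this with h | h
      · refine ⟨Sᶜ.equivFin ⟨a, Finset.mem_compl.2 h⟩, ?_, Or.inl ?_⟩
        · exact hadj
        · rw [Equiv.symm_apply_apply]
      · refine ⟨Sᶜ.equivFin ⟨b, Finset.mem_compl.2 h⟩, ?_, Or.inr ?_⟩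
        · exact hadj
        · rw [Equiv.symm_apply_apply]

/-- If `G` is a permutation graph on `n` vertices then `t(G) ≤ min (α(G), n - α(G))`. -/
theorem thresholdDim_le_min
    {V : Type*} [Fintype V] (G : SimpleGraph V)
    (hG : IsPermutationGraph G) :
    thresholdDim G ≤ min (alphaNum G) (Fintype.card V - alphaNum G) := by
  obtain ⟨n, π, ⟨e⟩⟩ := hG
  refine le_min ?_ (dim_le_compl_alpha G)
  refine dim_le_alpha G (fun v => ((e v : Fin n) : ℤ))
    (fun v => ((π.symm (e v) : Fin n) : ℤ)) ?_ ?_ ?_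
  · intro a b h
    apply EquivLike.injective e
    have h' : ((e a : Fin n) : ℤ) = ((e b : Fin n) : ℤ) := h
    have : ((e a : Fin n) : ℕ) = ((e b : Fin n) : ℕ) := by exact_mod_cast h'
    exact Fin.val_injective this
  · intro a b h
    apply EquivLike.injective e
    apply EquivLike.injective π.symm
    have h' : ((π.symm (e a) : Fin n) : ℤ) = ((π.symm (e b) : Fin n) : ℤ) := h
    have : ((π.symm (e a) : Fin n) : ℕ) = ((π.symm (e b) : Fin n) : ℕ) := by exact_mod_cast h'
    exact Fin.val_injective this
  · intro a b
    exact (e.map_adj_iff).symm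
end

section
/- If G is a permutation graph on n vertices, then its threshold dimension satisfies t(G) ≤ n/2, i.e., 2·t(G) ≤ n. -/
lemma isStable_iff {V : Type*} (G : SimpleGraph V) (U : Finset V) :
    IsStableSet G ↑U ↔ ∀ x ∈ U, ∀ y ∈ U, x ≠ y → ¬ G.Adj x y := by
  unfold IsStableSet Set.Pairwise
  simp

section PG

variable {n : ℕ} (π : Equiv.Perm (Fin n))

def pgDom (x y : Fin n) : Prop := x < y ∧ π.symm x < π.symm y
instance pgDomDec : ∀ x y : Fin n, Decidable (pgDom π x y) := fun _ _ => instDecidableAnd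

/-- rank with fuel -/
def pgRkAux : ℕ → Fin n → ℕ
  | 0, _ => 1
  | (m+1), i => 1 + (Finset.univ.filter (fun j => pgDom π j i)).sup (fun j => pgRkAux m j)

lemma pgRkAux_eq : ∀ (k : ℕ) (i : Fin n) (m m' : ℕ), i.val ≤ k → i.val ≤ m → i.val ≤ m' →
    pgRkAux π m i = pgRkAux π m' i := by
  intro k
  induction k with
  | zero =>
    intro i m m' hk hm hm'
    have hempty : (Finset.univ.filter (fun j => pgDom π j i)) = ∅ := by
      apply Finset.filter_false_of_mem
      intro j _ hj
      have : j.val < i.val := hj.1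
      omega
    cases m <;> cases m' <;> simp [pgRkAux, hempty]
  | succ k ih =>
    intro i m m' hk hm hm'
    cases m with
    | zero =>
      have : i.val = 0 := by omega
      cases m' with
      | zero => rfl
      | succ m' =>
        have hempty : (Finset.univ.filter (fun j => pgDom π j i)) = ∅ := by
          apply Finset.filter_false_of_mem
          intro j _ hj
          have : j.val < i.val := hj.1
          omega
        simp [pgRkAux, hempty]
    | succ m =>
      cases m' with
      | zero =>
        have : i.val = 0 := by omega
        have hempty : (Finset.univ.filter (fun j => pgDom π j i)) = ∅ := by
          apply Finset.filter_false_of_mem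
          intro j _ hj
          have : j.val < i.val := hj.1
          omega
        simp [pgRkAux, hempty]
      | succ m' =>
        simp only [pgRkAux]
        congr 1
        apply Finset.sup_congr rfl
        intro j hj
        rw [Finset.mem_filter] at hj
        have hji : j.val < i.val := hj.2.1
        exact ih j m m' (by omega) (by omega) (by omega)

/-- rank of a vertex: length of longest dominance chain ending at it. -/
def pgRk (i : Fin n) : ℕ := pgRkAux π n i

lemma pgRk_eq (i : Fin n) :
    pgRk π i = 1 + (Finset.univ.filter (fun j => pgDom π j i)).sup (fun j => pgRk π j) := by
  have hn : 0 < n := i.pos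
  have h1 : pgRk π i = pgRkAux π ((n-1)+1) i := by
    unfold pgRk
    apply pgRkAux_eq π n i n ((n-1)+1) (by omega) (by omega) (by omega)
  rw [h1]
  simp only [pgRkAux]
  congr 1
  apply Finset.sup_congr rfl
  intro j hj
  rw [Finset.mem_filter] at hj
  have : j.val < i.val := hj.2.1
  exact pgRkAux_eq π n j (n-1) n (by omega) (by omega) (by omega)

lemma pgRk_pos (i : Fin n) : 1 ≤ pgRk π i := by rw [pgRk_eq]; omega

lemma pgRk_lt_of_dom {x y : Fin n} (h : pgDom π x y) : pgRk π x < pgRk π y := by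
  conv_rhs => rw [pgRk_eq]
  have hx : x ∈ Finset.univ.filter (fun j => pgDom π j y) := by
    simp [Finset.mem_filter, h]
  have h2 := Finset.le_sup (f := fun j => pgRk π j) hx
  omega

lemma pgRk_pred {i : Fin n} (h : 2 ≤ pgRk π i) :
    ∃ j, pgDom π j i ∧ pgRk π j + 1 = pgRk π i := by
  have he := pgRk_eq π i
  set s := Finset.univ.filter (fun j => pgDom π j i) with hs
  have hne : s.Nonempty := by
    by_contra hemp
    rw [Finset.not_nonempty_iff_eq_empty] at hemp
    rw [hemp] at he
    simp at he
    omega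
  obtain ⟨j, hj, hje⟩ := Finset.exists_mem_eq_sup s hne (fun j => pgRk π j)
  refine ⟨j, ?_, ?_⟩
  · rw [hs, Finset.mem_filter] at hj; exact hj.2
  · rw [he, hje]; omega

lemma permGraph_adj {x y : Fin n} :
    (permGraph n π).Adj x y ↔
      ((x < y ∧ π.symm y < π.symm x) ∨ (y < x ∧ π.symm x < π.symm y)) := by
  simp only [permGraph, Fin.lt_iff_val_lt_val]
  rw [mul_neg_iff]
  constructor
  · rintro (⟨h1,h2⟩|⟨h1,h2⟩)
    · right; omega
    · left; omega
  · rintro (⟨h1,h2⟩|⟨h1,h2⟩)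
    · right; omega
    · left; omega

lemma pgDom_not_adj {x y : Fin n} (h : pgDom π x y) : ¬ (permGraph n π).Adj x y := by
  rw [permGraph_adj]
  rcases h with ⟨h1, h2⟩
  rw [Fin.lt_iff_val_lt_val] at h1 h2
  rintro (⟨a,b⟩|⟨a,b⟩) <;> rw [Fin.lt_iff_val_lt_val] at a b <;> omega

lemma pg_trichotomy {x y : Fin n} (hxy : x ≠ y) :
    (permGraph n π).Adj x y ∨ pgDom π x y ∨ pgDom π y x := by
  rw [permGraph_adj]
  unfold pgDom
  have hv : x.val ≠ y.val := fun h => hxy (Fin.ext h)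
  have hp : (π.symm x).val ≠ (π.symm y).val := by
    intro h
    exact hxy (by simpa using congrArg π (Fin.ext h : π.symm x = π.symm y))
  simp only [Fin.lt_iff_val_lt_val]
  omega

lemma pgRk_same_adj {x y : Fin n} (hxy : x ≠ y) (h : pgRk π x = pgRk π y) :
    (permGraph n π).Adj x y := by
  rcases pg_trichotomy π hxy with ha | hd | hd
  · exact ha
  · exact absurd h (by have := pgRk_lt_of_dom π hd; omega)
  · exact absurd h (by have := pgRk_lt_of_dom π hd; omega)

lemma pgDom_trans {x y z : Fin n} (h1 : pgDom π x y) (h2 : pgDom π y z) : pgDom π x z :=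
  ⟨lt_trans h1.1 h2.1, lt_trans h1.2 h2.2⟩

lemma pg_exists_chain : ∀ (N : ℕ) (i : Fin n), i.val ≤ N →
    ∃ S : Finset (Fin n), i ∈ S ∧ S.card = pgRk π i ∧
      (∀ x ∈ S, x = i ∨ pgDom π x i) ∧
      (∀ x ∈ S, ∀ y ∈ S, x ≠ y → pgDom π x y ∨ pgDom π y x) := by
  intro N
  induction N with
  | zero =>
    intro i hi
    have hempty : (Finset.univ.filter (fun j => pgDom π j i)) = ∅ := by
      apply Finset.filter_false_of_mem
      intro j _ hj
      have : j.val < i.val := hj.1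
      omega
    refine ⟨{i}, Finset.mem_singleton_self i, ?_, ?_, ?_⟩
    · rw [pgRk_eq, hempty]; simp
    · intro x hx; left; exact Finset.mem_singleton.mp hx
    · intro x hx y hy hne
      rw [Finset.mem_singleton] at hx hy
      exact absurd (hx.trans hy.symm) hne
  | succ N ih =>
    intro i hi
    by_cases h2 : 2 ≤ pgRk π i
    · obtain ⟨j, hdom, hrk⟩ := pgRk_pred π h2
      have hjN : j.val ≤ N := by
        have : j.val < i.val := hdom.1
        omega
      obtain ⟨S, hjS, hcard, hbelow, hchain⟩ := ih j hjN
      have hiS : i ∉ S := by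
        intro hiS
        rcases hbelow i hiS with h | h
        · exact absurd (congrArg (fun z => z.val) h) (by have : j.val < i.val := hdom.1; simp; omega)
        · have h1 : i.val < j.val := h.1
          have h2' : j.val < i.val := hdom.1
          omega
      refine ⟨insert i S, Finset.mem_insert_self i S, ?_, ?_, ?_⟩
      · rw [Finset.card_insert_of_notMem hiS, hcard]; omega
      · intro x hx
        rcases Finset.mem_insert.mp hx with h | h
        · left; exact h
        · right
          rcases hbelow x h with h' | h'
          · rw [h']; exact hdom
          · exact pgDom_trans π h' hdom
      · intro x hx y hy hne
        rcases Finset.mem_insert.mp hx with hx' | hx' <;>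
          rcases Finset.mem_insert.mp hy with hy' | hy'
        · exact absurd (hx'.trans hy'.symm) hne
        · subst hx'
          right
          rcases hbelow y hy' with h' | h'
          · rw [h']; exact hdom
          · exact pgDom_trans π h' hdom
        · subst hy'
          left
          rcases hbelow x hx' with h' | h'
          · rw [h']; exact hdom
          · exact pgDom_trans π h' hdom
        · exact hchain x hx' y hy' hne
    · refine ⟨{i}, Finset.mem_singleton_self i, ?_, ?_, ?_⟩
      · have := pgRk_pos π i
        simp
        omega
      · intro x hx; left; exact Finset.mem_singleton.mp hx
      · intro x hx y hy hne
        rw [Finset.mem_singleton] at hx hy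
        exact absurd (hx.trans hy.symm) hne

end PG

section PG2
variable {n : ℕ} (π : Equiv.Perm (Fin n))

/-- star graph at `c` inside the permutation graph -/
def starG (c : Fin n) : SimpleGraph (Fin n) where
  Adj x y := (x = c ∧ (permGraph n π).Adj c y) ∨ (y = c ∧ (permGraph n π).Adj c x)
  symm := by constructor; intro x y h; tauto
  loopless := by
    constructor
    intro x
    rintro (⟨rfl, h⟩ | ⟨rfl, h⟩) <;> exact (permGraph n π).loopless.irrefl _ h

lemma starG_le (c : Fin n) {x y : Fin n} (h : (starG π c).Adj x y) :
    (permGraph n π).Adj x y := by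
  rcases h with ⟨rfl, h⟩ | ⟨rfl, h⟩
  · exact h
  · exact h.symm

lemma starG_threshold (c : Fin n) : IsThresholdGraph (starG π c) := by
  classical
  refine ⟨fun x => if x = c then 1 else if (permGraph n π).Adj c x then (1:ℝ)/(n+1) else 0,
    1, ?_, ?_⟩
  · intro v
    dsimp only
    split
    · norm_num
    · split
      · positivity
      · exact le_refl 0
  · intro U
    have hnn : ∀ x : Fin n,
        (0:ℝ) ≤ if x = c then 1 else if (permGraph n π).Adj c x then (1:ℝ)/(n+1) else 0 := by
      intro x
      split
      · norm_num
      · split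
        · positivity
        · exact le_refl 0
    constructor
    · -- sum ≤ 1 → stable
      intro hsum
      rw [isStable_iff]
      by_contra hbad
      push_neg at hbad
      obtain ⟨x, hx, y, hy, hxy, hadj⟩ := hbad
      have key : ∃ z ∈ U, c ∈ U ∧ z ≠ c ∧ (permGraph n π).Adj c z := by
        rcases hadj with ⟨hxc, h⟩ | ⟨hyc, h⟩
        · exact ⟨y, hy, hxc ▸ hx, fun hz => hxy (hxc ▸ hz ▸ rfl), h⟩
        · exact ⟨x, hx, hyc ▸ hy, fun hz => hxy (hz.trans hyc.symm), h⟩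
      obtain ⟨z, hzU, hcU, hzc, hadj'⟩ := key
      have hpair : ({c, z} : Finset (Fin n)) ⊆ U := by
        intro a ha
        rcases Finset.mem_insert.mp ha with rfl | ha
        · exact hcU
        · rw [Finset.mem_singleton] at ha; exact ha ▸ hzU
      have hple : ∑ v ∈ ({c, z} : Finset (Fin n)),
          (if v = c then 1 else if (permGraph n π).Adj c v then (1:ℝ)/(n+1) else 0) ≤
          ∑ v ∈ U, (if v = c then 1 else if (permGraph n π).Adj c v then (1:ℝ)/(n+1) else 0) :=
        Finset.sum_le_sum_of_subset_of_nonneg hpair (fun i _ _ => hnn i)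
      rw [Finset.sum_pair (fun h => hzc h.symm)] at hple
      have e1 : (if c = c then (1:ℝ) else if (permGraph n π).Adj c c then 1/(↑n+1) else 0) = 1 := by
        rw [if_pos rfl]
      have e2 : (if z = c then (1:ℝ) else if (permGraph n π).Adj c z then 1/(↑n+1) else 0)
          = 1/(↑n+1) := by rw [if_neg hzc, if_pos hadj']
      rw [e1, e2] at hple
      dsimp only at hsum
      have hpos : (0:ℝ) < 1/(n+1) := by positivity
      linarith
    · -- stable → sum ≤ 1
      intro hst
      rw [isStable_iff] at hst
      by_cases hc : c ∈ U
      · have hz : ∀ x ∈ U.erase c,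
            (if x = c then 1 else if (permGraph n π).Adj c x then (1:ℝ)/(n+1) else 0) = 0 := by
          intro x hx
          have hxc : x ≠ c := Finset.ne_of_mem_erase hx
          have hxU : x ∈ U := Finset.mem_of_mem_erase hx
          have : ¬ (starG π c).Adj c x := hst c hc x hxU (fun h => hxc h.symm)
          have hnadj : ¬ (permGraph n π).Adj c x := by
            intro h; exact this (Or.inl ⟨rfl, h⟩)
          rw [if_neg hxc, if_neg hnadj]
        rw [← Finset.add_sum_erase _ _ hc, if_pos rfl, Finset.sum_eq_zero hz]
        norm_num
      · have hb : ∀ x ∈ U,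
            (if x = c then 1 else if (permGraph n π).Adj c x then (1:ℝ)/(n+1) else 0) ≤ 1/(n+1) := by
          intro x hx
          have hxc : x ≠ c := fun h => hc (h ▸ hx)
          rw [if_neg hxc]
          split
          · exact le_refl _
          · positivity
        calc ∑ v ∈ U, (if v = c then 1 else if (permGraph n π).Adj c v then (1:ℝ)/(n+1) else 0)
            ≤ ∑ _v ∈ U, (1:ℝ)/(n+1) := Finset.sum_le_sum hb
          _ = (U.card : ℝ) * (1/(n+1)) := by rw [Finset.sum_const, nsmul_eq_mul]
          _ ≤ (n : ℝ) * (1/(n+1)) := by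
              apply mul_le_mul_of_nonneg_right
              · exact_mod_cast (by simpa using Finset.card_le_univ U)
              · positivity
          _ ≤ 1 := by
              rw [mul_one_div, div_le_one (by positivity)]
              linarith

end PG2

section PG3
variable {n : ℕ} (π : Equiv.Perm (Fin n))

/-- `y` is strictly south-east of `x`: smaller value, larger position. -/
def pgSE (x y : Fin n) : Prop := y < x ∧ π.symm x < π.symm y
instance pgSEDec : ∀ x y : Fin n, Decidable (pgSE π x y) := fun _ _ => instDecidableAnd

lemma pgSE_adj {x y : Fin n} (h : pgSE π x y) : (permGraph n π).Adj x y :=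
  (permGraph_adj π).mpr (Or.inr h)

/-- attachment set: layer elements south-east of `x`. -/
def pgA (tl : ℕ) (x : Fin n) : Finset (Fin n) :=
  Finset.univ.filter (fun e => pgRk π e = tl ∧ pgSE π x e)

def pgKf (tl : ℕ) (x : Fin n) : ℕ := (pgA π tl x).card

def pgJf (tl : ℕ) (e : Fin n) : ℕ :=
  (Finset.univ.filter (fun e' => pgRk π e' = tl ∧ e' ≤ e)).card

def pgF (n k : ℕ) : ℕ := (n+1)^k - 1

def pgB (tl m : ℕ) : ℕ :=
  ∑ x ∈ Finset.univ.filter (fun x => pgRk π x ≠ tl ∧ pgKf π tl x ≤ m), pgF n (pgKf π tl x)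

def pgT0 (tl : ℕ) : ℕ := 2 * pgB π tl n + 1

def pgWN (tl : ℕ) (x : Fin n) : ℕ :=
  if pgRk π x = tl then pgT0 π tl - pgB π tl (pgJf π tl x - 1) else pgF n (pgKf π tl x)

/-- The threshold graph associated to the rank-`tl` layer. -/
def layerG (tl : ℕ) : SimpleGraph (Fin n) where
  Adj x y := x ≠ y ∧ ((pgRk π x = tl ∧ pgRk π y = tl) ∨
    (pgRk π x = tl ∧ pgRk π y ≠ tl ∧ pgSE π y x) ∨
    (pgRk π y = tl ∧ pgRk π x ≠ tl ∧ pgSE π x y))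
  symm := by
    constructor
    intro x y ⟨hne, h⟩
    refine ⟨hne.symm, ?_⟩
    tauto
  loopless := by constructor; intro x ⟨hne, _⟩; exact hne rfl

lemma layerG_le (tl : ℕ) {x y : Fin n} (h : (layerG π tl).Adj x y) :
    (permGraph n π).Adj x y := by
  obtain ⟨hne, h⟩ := h
  rcases h with ⟨h1, h2⟩ | ⟨h1, h2, h3⟩ | ⟨h1, h2, h3⟩
  · exact pgRk_same_adj π hne (h1.trans h2.symm)
  · exact ((pgSE_adj π h3).symm)
  · exact pgSE_adj π h3

lemma pgKf_le (tl : ℕ) (x : Fin n) : pgKf π tl x ≤ n := by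
  unfold pgKf
  calc (pgA π tl x).card ≤ Finset.univ.card := Finset.card_le_univ _
  _ = n := by simp

lemma pgB_mono (tl : ℕ) {m m' : ℕ} (hm : m ≤ m') : pgB π tl m ≤ pgB π tl m' := by
  unfold pgB
  apply Finset.sum_le_sum_of_subset
  intro x hx
  rw [Finset.mem_filter] at hx ⊢
  exact ⟨hx.1, hx.2.1, hx.2.2.trans hm⟩

lemma pgB_le (tl m : ℕ) : pgB π tl m ≤ pgB π tl n := by
  unfold pgB
  apply Finset.sum_le_sum_of_subset
  intro x hx
  rw [Finset.mem_filter] at hx ⊢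
  exact ⟨hx.1, hx.2.1, pgKf_le π tl x⟩

lemma pgJf_pos {tl : ℕ} {e : Fin n} (he : pgRk π e = tl) : 1 ≤ pgJf π tl e := by
  apply Finset.card_pos.mpr
  exact ⟨e, by simp [he]⟩

lemma pg_step {tl : ℕ} {e e' x : Fin n} (he : pgRk π e = tl) (he' : pgRk π e' = tl)
    (hle : e' ≤ e) (hse : pgSE π x e) : pgSE π x e' := by
  rcases eq_or_lt_of_le hle with rfl | hlt
  · exact hse
  · have hne : e' ≠ e := ne_of_lt hlt
    have hadj : (permGraph n π).Adj e' e := pgRk_same_adj π hne (he'.trans he.symm)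
    rw [permGraph_adj] at hadj
    have hpos : π.symm e < π.symm e' := by
      rcases hadj with ⟨_, h⟩ | ⟨h1, _⟩
      · exact h
      · exact absurd hlt (asymm h1)
    exact ⟨lt_trans hlt hse.1, lt_trans hse.2 hpos⟩

lemma pg_prefix {tl : ℕ} {e x : Fin n} (he : pgRk π e = tl) (hx : pgRk π x ≠ tl) :
    (pgSE π x e ↔ pgJf π tl e ≤ pgKf π tl x) := by
  constructor
  · intro hse
    apply Finset.card_le_card
    intro e' he'
    rw [Finset.mem_filter] at he'
    rw [pgA, Finset.mem_filter]
    exact ⟨Finset.mem_univ _, he'.2.1, pg_step π he he'.2.1 he'.2.2 hse⟩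
  · intro hle
    by_contra hnse
    have hsub : pgA π tl x ⊂ Finset.univ.filter (fun e' => pgRk π e' = tl ∧ e' ≤ e) := by
      rw [Finset.ssubset_iff_of_subset]
      · exact ⟨e, by simp [he], by rw [pgA]; simp [hnse]⟩
      · intro e'' he''
        rw [pgA, Finset.mem_filter] at he''
        rw [Finset.mem_filter]
        refine ⟨Finset.mem_univ _, he''.2.1, ?_⟩
        by_contra hgt
        push_neg at hgt
        exact hnse (pg_step π he''.2.1 he (le_of_lt hgt) he''.2.2)
    have hcard := Finset.card_lt_card hsub
    have : pgKf π tl x < pgJf π tl e := hcard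
    omega

lemma pg_main_ineq (tl : ℕ) {j : ℕ} (hj : 1 ≤ j) (hn : 1 ≤ n) :
    pgB π tl (j-1) < pgF n j := by
  obtain ⟨d, hd⟩ : ∃ d, (n+1)^(j-1) = d + 1 :=
    ⟨(n+1)^(j-1) - 1, (Nat.sub_add_cancel (Nat.one_le_pow _ _ (by omega))).symm⟩
  have hsum : pgB π tl (j-1) ≤ (Finset.univ.filter
      (fun x => pgRk π x ≠ tl ∧ pgKf π tl x ≤ j-1)).card * d := by
    unfold pgB
    apply Finset.sum_le_card_nsmul
    intro x hx
    rw [Finset.mem_filter] at hx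
    have hp : (n+1)^(pgKf π tl x) ≤ (n+1)^(j-1) := Nat.pow_le_pow_right (by omega) hx.2.2
    unfold pgF
    omega
  have hcard : (Finset.univ.filter (fun x => pgRk π x ≠ tl ∧ pgKf π tl x ≤ j-1)).card ≤ n := by
    calc _ ≤ Finset.univ.card := Finset.card_le_univ _
    _ = n := by simp
  have h1 : pgB π tl (j-1) ≤ n * d :=
    le_trans hsum (Nat.mul_le_mul_right _ hcard)
  have hpow : (n+1)^j = n * d + n + d + 1 := by
    have hj' : j = (j - 1) + 1 := by omega
    rw [hj', pow_succ, hd]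
    ring
  unfold pgF
  omega

lemma layerG_stable_iff (tl : ℕ) (U : Finset (Fin n)) :
    IsStableSet (layerG π tl) ↑U ↔
      ((∀ e ∈ U, ∀ e' ∈ U, pgRk π e = tl → pgRk π e' = tl → e = e') ∧
       (∀ e ∈ U, ∀ x ∈ U, pgRk π e = tl → pgRk π x ≠ tl → ¬ pgSE π x e)) := by
  rw [isStable_iff]
  constructor
  · intro hst
    constructor
    · intro e he e' he' hrk hrk'
      by_contra hne
      exact hst e he e' he' hne ⟨hne, Or.inl ⟨hrk, hrk'⟩⟩
    · intro e he x hx hrk hrkx hse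
      have hne : x ≠ e := fun h => hrkx (h ▸ hrk)
      exact hst x hx e he hne ⟨hne, Or.inr (Or.inr ⟨hrk, hrkx, hse⟩)⟩
  · rintro ⟨h1, h2⟩ x hx y hy hne ⟨_, hadj⟩
    rcases hadj with ⟨ha, hb⟩ | ⟨ha, hb, hc⟩ | ⟨ha, hb, hc⟩
    · exact hne (h1 x hx y hy ha hb)
    · exact h2 x hx y hy ha hb hc
    · exact h2 y hy x hx ha hb hc

lemma layerG_threshold (tl : ℕ) : IsThresholdGraph (layerG π tl) := by
  classical
  refine ⟨fun x => (pgWN π tl x : ℝ), (pgT0 π tl : ℝ), fun v => by positivity, ?_⟩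
  intro U
  have hcast : (∑ v ∈ U, ((pgWN π tl v : ℕ) : ℝ)) = ((∑ v ∈ U, pgWN π tl v : ℕ) : ℝ) := by
    rw [Nat.cast_sum]
  rw [hcast, Nat.cast_le, layerG_stable_iff]
  have ht0 : pgT0 π tl = 2 * pgB π tl n + 1 := rfl
  constructor
  · -- sum small → stable
    intro hsum
    constructor
    · intro e he e' he' hrk hrk'
      by_contra hne
      have hpair : ({e, e'} : Finset (Fin n)) ⊆ U := by
        intro a ha
        rcases Finset.mem_insert.mp ha with rfl | ha
        · exact he
        · rw [Finset.mem_singleton] at ha; exact ha ▸ he'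
      have hple : ∑ v ∈ ({e, e'} : Finset (Fin n)), pgWN π tl v ≤ ∑ v ∈ U, pgWN π tl v :=
        Finset.sum_le_sum_of_subset hpair
      rw [Finset.sum_pair hne] at hple
      have hwe : pgWN π tl e = pgT0 π tl - pgB π tl (pgJf π tl e - 1) := if_pos hrk
      have hwe' : pgWN π tl e' = pgT0 π tl - pgB π tl (pgJf π tl e' - 1) := if_pos hrk'
      have hb1 : pgB π tl (pgJf π tl e - 1) ≤ pgB π tl n := pgB_le π tl _
      have hb2 : pgB π tl (pgJf π tl e' - 1) ≤ pgB π tl n := pgB_le π tl _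
      omega
    · intro e he x hx hrk hrkx hse
      have hne : e ≠ x := fun h => hrkx (h ▸ hrk)
      have hpair : ({e, x} : Finset (Fin n)) ⊆ U := by
        intro a ha
        rcases Finset.mem_insert.mp ha with rfl | ha
        · exact he
        · rw [Finset.mem_singleton] at ha; exact ha ▸ hx
      have hple : ∑ v ∈ ({e, x} : Finset (Fin n)), pgWN π tl v ≤ ∑ v ∈ U, pgWN π tl v :=
        Finset.sum_le_sum_of_subset hpair
      rw [Finset.sum_pair hne] at hple
      have hwe : pgWN π tl e = pgT0 π tl - pgB π tl (pgJf π tl e - 1) := if_pos hrk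
      have hwx : pgWN π tl x = pgF n (pgKf π tl x) := if_neg hrkx
      have hjk : pgJf π tl e ≤ pgKf π tl x := (pg_prefix π hrk hrkx).mp hse
      have hn1 : 1 ≤ n := e.pos
      have hmain := pg_main_ineq π tl (pgJf_pos π hrk) hn1
      have hfmono : pgF n (pgJf π tl e) ≤ pgF n (pgKf π tl x) := by
        have hmono : (n+1)^(pgJf π tl e) ≤ (n+1)^(pgKf π tl x) :=
          Nat.pow_le_pow_right (by omega) hjk
        unfold pgF
        omega
      have hb1 : pgB π tl (pgJf π tl e - 1) ≤ pgB π tl n := pgB_le π tl _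
      omega
  · -- stable → sum small
    rintro ⟨h1, h2⟩
    by_cases hex : ∃ e ∈ U, pgRk π e = tl
    · obtain ⟨e, he, hrk⟩ := hex
      rw [← Finset.add_sum_erase _ _ he]
      have hwe : pgWN π tl e = pgT0 π tl - pgB π tl (pgJf π tl e - 1) := if_pos hrk
      have herase : ∀ x ∈ U.erase e, pgRk π x ≠ tl ∧ pgKf π tl x ≤ pgJf π tl e - 1 := by
        intro x hxe
        have hxU : x ∈ U := Finset.mem_of_mem_erase hxe
        have hxne : x ≠ e := Finset.ne_of_mem_erase hxe
        have hrkx : pgRk π x ≠ tl := by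
          intro hrkx
          exact hxne (h1 x hxU e he hrkx hrk)
        have hnse : ¬ pgSE π x e := h2 e he x hxU hrk hrkx
        have hlt : ¬ pgJf π tl e ≤ pgKf π tl x := fun h => hnse ((pg_prefix π hrk hrkx).mpr h)
        have := pgJf_pos π hrk
        exact ⟨hrkx, by omega⟩
      have hsum2 : ∑ x ∈ U.erase e, pgWN π tl x ≤ pgB π tl (pgJf π tl e - 1) := by
        have hcongr : ∑ x ∈ U.erase e, pgWN π tl x = ∑ x ∈ U.erase e, pgF n (pgKf π tl x) := by
          apply Finset.sum_congr rfl
          intro x hx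
          exact if_neg (herase x hx).1
        rw [hcongr]
        unfold pgB
        apply Finset.sum_le_sum_of_subset
        intro x hx
        rw [Finset.mem_filter]
        exact ⟨Finset.mem_univ _, herase x hx⟩
      have hb1 : pgB π tl (pgJf π tl e - 1) ≤ pgB π tl n := pgB_le π tl _
      omega
    · push_neg at hex
      have hcongr : ∑ x ∈ U, pgWN π tl x = ∑ x ∈ U, pgF n (pgKf π tl x) := by
        apply Finset.sum_congr rfl
        intro x hx
        exact if_neg (hex x hx)
      have hle : ∑ x ∈ U, pgF n (pgKf π tl x) ≤ pgB π tl n := by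
        unfold pgB
        apply Finset.sum_le_sum_of_subset
        intro x hx
        rw [Finset.mem_filter]
        exact ⟨Finset.mem_univ _, hex x hx, pgKf_le π tl x⟩
      omega

end PG3

section PG4
variable {n : ℕ} (π : Equiv.Perm (Fin n))

lemma cover_layers (ha : (Finset.univ : Finset (Fin n)).sup (pgRk π) = a) :
    (⋃ i : Fin a, (layerG π (i.val + 1)).edgeSet) = (permGraph n π).edgeSet := by
  apply Set.eq_of_subset_of_subset
  · rintro s hs
    rw [Set.mem_iUnion] at hs
    obtain ⟨i, hs⟩ := hs
    revert hs
    refine Sym2.ind (fun x y => ?_) s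
    intro h
    rw [SimpleGraph.mem_edgeSet] at h ⊢
    exact layerG_le π _ h
  · rintro s hs
    revert hs
    refine Sym2.ind (fun x y => ?_) s
    intro h
    rw [SimpleGraph.mem_edgeSet] at h
    rw [Set.mem_iUnion]
    have hne : x ≠ y := (permGraph n π).ne_of_adj h
    rcases (permGraph_adj π).mp h with ⟨h1, h2⟩ | ⟨h1, h2⟩
    · -- x < y, pos y < pos x :  x is SE of y; lower endpoint is x
      have hse : pgSE π y x := ⟨h1, h2⟩
      have hrk1 : 1 ≤ pgRk π x := pgRk_pos π x
      have hrka : pgRk π x ≤ a := ha ▸ Finset.le_sup (Finset.mem_univ x)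
      refine ⟨⟨pgRk π x - 1, by omega⟩, ?_⟩
      rw [SimpleGraph.mem_edgeSet]
      have heq : pgRk π x - 1 + 1 = pgRk π x := by omega
      show (layerG π (pgRk π x - 1 + 1)).Adj x y
      rw [heq]
      by_cases hxy : pgRk π y = pgRk π x
      · exact ⟨hne, Or.inl ⟨rfl, hxy⟩⟩
      · exact ⟨hne, Or.inr (Or.inl ⟨rfl, hxy, hse⟩)⟩
    · -- y < x : y is SE of x
      have hse : pgSE π x y := ⟨h1, h2⟩
      have hrk1 : 1 ≤ pgRk π y := pgRk_pos π y
      have hrka : pgRk π y ≤ a := ha ▸ Finset.le_sup (Finset.mem_univ y)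
      refine ⟨⟨pgRk π y - 1, by omega⟩, ?_⟩
      rw [SimpleGraph.mem_edgeSet]
      have heq : pgRk π y - 1 + 1 = pgRk π y := by omega
      show (layerG π (pgRk π y - 1 + 1)).Adj x y
      rw [heq]
      by_cases hxy : pgRk π x = pgRk π y
      · exact ⟨hne, Or.inl ⟨hxy, rfl⟩⟩
      · exact ⟨hne, Or.inr (Or.inr ⟨rfl, hxy, hse⟩)⟩

lemma cover_stars {S : Finset (Fin n)}
    (hchain : ∀ x ∈ S, ∀ y ∈ S, x ≠ y → pgDom π x y ∨ pgDom π y x) :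
    (⋃ i : Fin ((Finset.univ \ S).card),
      (starG π ((Finset.univ \ S).equivFin.symm i : Fin n)).edgeSet)
      = (permGraph n π).edgeSet := by
  apply Set.eq_of_subset_of_subset
  · rintro s hs
    rw [Set.mem_iUnion] at hs
    obtain ⟨i, hs⟩ := hs
    revert hs
    refine Sym2.ind (fun x y => ?_) s
    intro h
    rw [SimpleGraph.mem_edgeSet] at h ⊢
    exact starG_le π _ h
  · rintro s hs
    revert hs
    refine Sym2.ind (fun x y => ?_) s
    intro h
    rw [SimpleGraph.mem_edgeSet] at h
    rw [Set.mem_iUnion]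
    have hne : x ≠ y := (permGraph n π).ne_of_adj h
    have hout : x ∉ S ∨ y ∉ S := by
      by_contra hc
      push_neg at hc
      rcases hchain x hc.1 y hc.2 hne with hd | hd
      · exact pgDom_not_adj π hd h
      · exact pgDom_not_adj π hd (h.symm)
    rcases hout with hx | hy
    · have hxF : x ∈ Finset.univ \ S := by rw [Finset.mem_sdiff]; exact ⟨Finset.mem_univ _, hx⟩
      refine ⟨(Finset.univ \ S).equivFin ⟨x, hxF⟩, ?_⟩
      rw [SimpleGraph.mem_edgeSet]
      have : ((Finset.univ \ S).equivFin.symm ((Finset.univ \ S).equivFin ⟨x, hxF⟩) : Fin n)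
          = x := by rw [Equiv.symm_apply_apply]
      rw [this]
      exact Or.inl ⟨rfl, h⟩
    · have hyF : y ∈ Finset.univ \ S := by rw [Finset.mem_sdiff]; exact ⟨Finset.mem_univ _, hy⟩
      refine ⟨(Finset.univ \ S).equivFin ⟨y, hyF⟩, ?_⟩
      rw [SimpleGraph.mem_edgeSet]
      have : ((Finset.univ \ S).equivFin.symm ((Finset.univ \ S).equivFin ⟨y, hyF⟩) : Fin n)
          = y := by rw [Equiv.symm_apply_apply]
      rw [this]
      exact Or.inr ⟨rfl, h.symm⟩

lemma perm_cover (n : ℕ) (π : Equiv.Perm (Fin n)) :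
    ∃ k : ℕ, 2 * k ≤ n ∧ ∃ T : Fin k → SimpleGraph (Fin n),
      (∀ i, IsThresholdGraph (T i)) ∧ (⋃ i, (T i).edgeSet) = (permGraph n π).edgeSet := by
  classical
  set a : ℕ := (Finset.univ : Finset (Fin n)).sup (pgRk π) with hadef
  by_cases hcase : 2 * a ≤ n
  · exact ⟨a, hcase, fun i => layerG π (i.val + 1),
      fun i => layerG_threshold π _, cover_layers π rfl⟩
  · push_neg at hcase
    have hne : (Finset.univ : Finset (Fin n)).Nonempty := by
      by_contra hemp
      rw [Finset.not_nonempty_iff_eq_empty] at hemp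
      rw [hadef, hemp, Finset.sup_empty] at hcase
      simp only [Nat.bot_eq_zero] at hcase
      omega
    obtain ⟨i₀, _, hi₀⟩ := Finset.exists_mem_eq_sup Finset.univ hne (pgRk π)
    obtain ⟨S, hiS, hcardS, _, hchain⟩ := pg_exists_chain π i₀.val i₀ (le_refl _)
    have hcardS' : S.card = a := by rw [hcardS, ← hi₀]
    have hSu : S ⊆ Finset.univ := Finset.subset_univ S
    have hcardF : (Finset.univ \ S).card = n - a := by
      rw [Finset.card_sdiff_of_subset hSu, Finset.card_univ, Fintype.card_fin, hcardS']
    refine ⟨(Finset.univ \ S).card, ?_, ?_⟩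
    · have han : a ≤ n := by
        rw [← hcardS']
        calc S.card ≤ Finset.univ.card := Finset.card_le_univ S
        _ = n := by simp
      omega
    · exact ⟨fun i => starG π ((Finset.univ \ S).equivFin.symm i : Fin n),
        fun i => starG_threshold π _, cover_stars π hchain⟩

end PG4


lemma threshold_comap {V W : Type*} [Fintype V] [Fintype W] (φ : V ≃ W)
    (H : SimpleGraph W) (h : IsThresholdGraph H) :
    IsThresholdGraph (H.comap φ) := by
  classical
  obtain ⟨w, t, hw, hiff⟩ := h
  refine ⟨fun v => w (φ v), t, fun v => hw _, ?_⟩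
  intro U
  have hsum : (∑ v ∈ U, w (φ v)) = ∑ u ∈ U.image φ, w u := by
    rw [Finset.sum_image (fun a _ b _ hab => φ.injective hab)]
  rw [hsum, hiff]
  rw [isStable_iff, isStable_iff]
  constructor
  · intro hst x hx y hy hne hadj
    have hx' : φ x ∈ U.image φ := Finset.mem_image_of_mem φ hx
    have hy' : φ y ∈ U.image φ := Finset.mem_image_of_mem φ hy
    exact hst (φ x) hx' (φ y) hy' (fun he => hne (φ.injective he)) hadj
  · intro hst x hx y hy hne hadj
    obtain ⟨x₀, hx₀, rfl⟩ := Finset.mem_image.mp hx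
    obtain ⟨y₀, hy₀, rfl⟩ := Finset.mem_image.mp hy
    exact hst x₀ hx₀ y₀ hy₀ (fun he => hne (he ▸ rfl)) hadj


/-- Theorem 6: if `G` is a permutation graph on `n` vertices then `t(G) ≤ n / 2`,
i.e. `2 * t(G) ≤ n`. -/
theorem two_mul_thresholdDim_le_card
    {V : Type*} [Fintype V] (G : SimpleGraph V)
    (hG : IsPermutationGraph G) :
    2 * thresholdDim G ≤ Fintype.card V := by
  classical
  obtain ⟨m, π, ⟨e⟩⟩ := hG
  have hcard : Fintype.card V = m := by
    rw [← Fintype.card_fin m]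
    exact Fintype.card_congr e.toEquiv
  obtain ⟨k, hk, T, hT, hTU⟩ := perm_cover m π
  have hmem : k ∈ {k | ∃ T : Fin k → SimpleGraph V,
      (∀ i, IsThresholdGraph (T i)) ∧ (⋃ i, (T i).edgeSet) = G.edgeSet} := by
    refine ⟨fun i => (T i).comap e.toEquiv, fun i => threshold_comap e.toEquiv _ (hT i), ?_⟩
    apply Set.eq_of_subset_of_subset
    · rintro s hs
      rw [Set.mem_iUnion] at hs
      obtain ⟨i, hs⟩ := hs
      revert hs
      refine Sym2.ind (fun x y => ?_) s
      intro h
      rw [SimpleGraph.mem_edgeSet] at h ⊢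
      have h' : (T i).Adj (e.toEquiv x) (e.toEquiv y) := h
      have hmemP : (permGraph m π).Adj (e.toEquiv x) (e.toEquiv y) := by
        have : s(e.toEquiv x, e.toEquiv y) ∈ (permGraph m π).edgeSet := by
          rw [← hTU, Set.mem_iUnion]
          exact ⟨i, h'⟩
        exact this
      exact e.map_adj_iff.mp hmemP
    · rintro s hs
      revert hs
      refine Sym2.ind (fun x y => ?_) s
      intro h
      rw [SimpleGraph.mem_edgeSet] at h
      have hmemP : (permGraph m π).Adj (e.toEquiv x) (e.toEquiv y) := e.map_adj_iff.mpr h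
      have : s(e.toEquiv x, e.toEquiv y) ∈ ⋃ i, (T i).edgeSet := by
        rw [hTU]
        exact hmemP
      rw [Set.mem_iUnion] at this
      obtain ⟨i, hi⟩ := this
      rw [Set.mem_iUnion]
      exact ⟨i, hi⟩
  have hd : thresholdDim G ≤ k := Nat.sInf_le hmem
  calc 2 * thresholdDim G ≤ 2 * k := by omega
  _ ≤ m := hk
  _ = Fintype.card V := hcard.symm
end
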